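/- arXiv:2212.05002 — 4 statements merged into one kernel-verified Lean document; each statement's English description precedes it below -/
import Mathlib

section
/- Let v and w be fully commutative permutations in S_n. (a) If v ≤ w in the right weak order, then Row₂(P(v)) ⊆ Row₂(P(w)). (b) If v ≤ w in the left weak order, then Row₂(Q(v)) ⊆ Row₂(Q(w)), where Q denotes the RSK recording tableau. -/
/-- The value in position `j` (0-indexed) of the one-line notation of `w`,
extended by the identity outside the range `[0, n)`. -/
def entry {n : ℕ} (w : Equiv.Perm (Fin n)) (j : ℕ) : ℕ :=
  if h : j < n then (w ⟨j, h⟩ : ℕ) else j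

/-- One-line notation of a permutation, as a list of natural numbers (0-indexed values). -/
def oneLine {n : ℕ} (w : Equiv.Perm (Fin n)) : List ℕ :=
  List.ofFn (fun i => (w i : ℕ))

/-- A permutation is fully commutative iff it avoids the pattern 321. -/
def FullyCommutative {n : ℕ} (w : Equiv.Perm (Fin n)) : Prop :=
  ¬ ∃ i j k : Fin n, i < j ∧ j < k ∧ w k < w j ∧ w j < w i

/-- A permutation is boolean iff it avoids the patterns 321 and 3412. -/
def BooleanPerm {n : ℕ} (w : Equiv.Perm (Fin n)) : Prop :=
  FullyCommutative w ∧
    ¬ ∃ i j k l : Fin n, i < j ∧ j < k ∧ k < l ∧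
        w k < w l ∧ w l < w i ∧ w i < w j

/-- The Coxeter length of a permutation: its number of inversions. -/
def invCount {n : ℕ} (w : Equiv.Perm (Fin n)) : ℕ :=
  (Finset.univ.filter fun p : Fin n × Fin n => p.1 < p.2 ∧ w p.2 < w p.1).card

/-- The support of `w`: the set of (0-indexed) indices `i` such that the simple
transposition `s_i` appears in some (equivalently, every) reduced word of `w`;
equivalently, `{w(0),…,w(i)} ≠ {0,…,i}`, i.e. `max {w(j) : j ≤ i} > i`. -/
def Supp {n : ℕ} (w : Equiv.Perm (Fin n)) : Set ℕ :=
  {i | ∃ j : Fin n, (j : ℕ) ≤ i ∧ i < (w j : ℕ)}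

/-- The simple transposition `s_i`, swapping positions `i` and `i+1` (0-indexed). -/
def simpleTr {n : ℕ} (i : ℕ) (h : i + 1 < n) : Equiv.Perm (Fin n) :=
  Equiv.swap ⟨i, by omega⟩ ⟨i + 1, h⟩

/-- Schensted row insertion of a value into a tableau (a list of rows). -/
def rowInsert : List (List ℕ) → ℕ → List (List ℕ)
  | [], x => [[x]]
  | r :: rest, x =>
    match r.find? (fun y => decide (x < y)) with
    | none => (r ++ [x]) :: rest
    | some y => (r.map fun z => if z = y then x else z) :: rowInsert rest y

/-- RSK insertion tableau of a list. -/
def RSKList (l : List ℕ) : List (List ℕ) := l.foldl rowInsert []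

/-- RSK insertion tableau `P(w)` of a permutation. -/
def RSKP {n : ℕ} (w : Equiv.Perm (Fin n)) : List (List ℕ) := RSKList (oneLine w)

/-- RSK recording tableau `Q(w) = P(w⁻¹)`. -/
def RSKQ {n : ℕ} (w : Equiv.Perm (Fin n)) : List (List ℕ) := RSKP w⁻¹

/-- The set of entries in the first row of a tableau. -/
def Row1 (T : List (List ℕ)) : Finset ℕ := (T.getD 0 []).toFinset

/-- The set of entries in the second row of a tableau. -/
def Row2 (T : List (List ℕ)) : Finset ℕ := (T.getD 1 []).toFinset

/-- `BumpsAt l k z` : during the RSK insertion of the list `l`, the insertion of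
the `(k+1)`-st letter of `l` bumps the value `z` from the first row to the
second row (`z` is the smallest first-row entry larger than the inserted letter). -/
def BumpsAt (l : List ℕ) (k : ℕ) (z : ℕ) : Prop :=
  k < l.length ∧
    ((RSKList (l.take k)).getD 0 []).find? (fun y => decide (l.getD k 0 < y)) = some z

/-- `Bumps l b z` : during the RSK insertion of `l`, the value `b` bumps the
value `z` from the first row to the second row. -/
def Bumps (l : List ℕ) (b z : ℕ) : Prop :=
  ∃ k, l.getD k 0 = b ∧ BumpsAt l k z

/-- A finite set of naturals is crowded if some integer interval `[y, y+2x]`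
(with `x > 0`) contains more than `x+1` of its elements. -/
def CrowdedSet (L : Finset ℕ) : Prop :=
  ∃ x y : ℤ, 0 < x ∧
    x + 1 < ((L.filter fun a : ℕ => y ≤ (a : ℤ) ∧ (a : ℤ) ≤ y + 2 * x).card : ℤ)

/-- A fully commutative permutation is crowded if the second row of its RSK
insertion tableau is a crowded set. -/
def CrowdedPerm {n : ℕ} (w : Equiv.Perm (Fin n)) : Prop :=
  CrowdedSet (Row2 (RSKP w))

/-- Covering relation of the right weak order. -/
def RWCovers {n : ℕ} (u v : Equiv.Perm (Fin n)) : Prop :=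
  ∃ i, ∃ h : i + 1 < n, v = u * simpleTr i h ∧ invCount v = invCount u + 1

/-- The right weak order on `S_n`. -/
def RightWeakLE {n : ℕ} : Equiv.Perm (Fin n) → Equiv.Perm (Fin n) → Prop :=
  Relation.ReflTransGen RWCovers

/-- Covering relation of the left weak order. -/
def LWCovers {n : ℕ} (u v : Equiv.Perm (Fin n)) : Prop :=
  ∃ i, ∃ h : i + 1 < n, v = simpleTr i h * u ∧ invCount v = invCount u + 1

/-- The left weak order on `S_n`. -/
def LeftWeakLE {n : ℕ} : Equiv.Perm (Fin n) → Equiv.Perm (Fin n) → Prop :=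
  Relation.ReflTransGen LWCovers

/-- A minimal crowded permutation: a crowded fully commutative permutation all of
whose strict predecessors (among fully commutative permutations) in the right
weak order are uncrowded. -/
def MinimalCrowded {n : ℕ} (w : Equiv.Perm (Fin n)) : Prop :=
  FullyCommutative w ∧ CrowdedPerm w ∧
    ∀ v : Equiv.Perm (Fin n), FullyCommutative v → RightWeakLE v w → v ≠ w →
      ¬ CrowdedPerm v

/-- `l` is an increasing subsequence of the one-line notation of `w`. -/
def IncreasingSubseq {n : ℕ} (w : Equiv.Perm (Fin n)) (l : List ℕ) : Prop :=
  l.Sublist (oneLine w) ∧ l.Pairwise (· < ·)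

/-- The length of a longest increasing subsequence of `w`. -/
noncomputable def lisLen {n : ℕ} (w : Equiv.Perm (Fin n)) : ℕ :=
  sSup {k | ∃ l : List ℕ, IncreasingSubseq w l ∧ l.length = k}

/-- A consecutive occurrence of the pattern 415263 starting at (0-indexed) position `i`. -/
def Consec415263 {n : ℕ} (w : Equiv.Perm (Fin n)) (i : ℕ) : Prop :=
  i + 5 < n ∧
    entry w (i + 1) < entry w (i + 3) ∧ entry w (i + 3) < entry w (i + 5) ∧
    entry w (i + 5) < entry w i ∧ entry w i < entry w (i + 2) ∧
    entry w (i + 2) < entry w (i + 4)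

/-- A consecutive occurrence of the pattern 315264 starting at (0-indexed) position `i`. -/
def Consec315264 {n : ℕ} (w : Equiv.Perm (Fin n)) (i : ℕ) : Prop :=
  i + 5 < n ∧
    entry w (i + 1) < entry w (i + 3) ∧ entry w (i + 3) < entry w i ∧
    entry w i < entry w (i + 5) ∧ entry w (i + 5) < entry w (i + 2) ∧
    entry w (i + 2) < entry w (i + 4)

/-- An occurrence (not necessarily consecutive) of the pattern 415263 in `w`,
at positions `p 0 < p 1 < ⋯ < p 5`. -/
def Occ415263 {n : ℕ} (w : Equiv.Perm (Fin n)) (p : Fin 6 → Fin n) : Prop :=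
  StrictMono p ∧
    w (p 1) < w (p 3) ∧ w (p 3) < w (p 5) ∧ w (p 5) < w (p 0) ∧
    w (p 0) < w (p 2) ∧ w (p 2) < w (p 4)

namespace Row2Proof

/-- 321-avoidance for lists. -/
def Av (l : List ℕ) : Prop := ∀ a b c : ℕ, [a, b, c].Sublist l → ¬ (c < b ∧ b < a)

lemma find?_blt_none {x : ℕ} {l : List ℕ} :
    l.find? (fun y => decide (x < y)) = none ↔ ∀ y ∈ l, y ≤ x := by
  rw [List.find?_eq_none]
  simp [Nat.not_lt]

lemma sorted_split {x : ℕ} {l : List ℕ} (hs : l.Pairwise (· < ·)) {z : ℕ}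
    (h : l.find? (fun y => decide (x < y)) = some z) :
    ∃ A B, l = A ++ z :: B ∧ (∀ a ∈ A, a ≤ x) ∧ x < z := by
  induction l with
  | nil => simp at h
  | cons a l ih =>
    by_cases hxa : x < a
    · rw [List.find?_cons_of_pos (by simpa)] at h
      obtain rfl : a = z := by simpa using h
      exact ⟨[], l, rfl, by simp, hxa⟩
    · rw [List.find?_cons_of_neg (by simpa using Nat.not_lt.mp hxa)] at h
      obtain ⟨A, B, rfl, hA, hxz⟩ := ih (List.Pairwise.of_cons hs) h
      refine ⟨a :: A, B, rfl, ?_, hxz⟩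
      intro b hb
      rcases List.mem_cons.mp hb with rfl | hb
      · exact Nat.not_lt.mp hxa
      · exact hA b hb

lemma sorted_decomp {A B : List ℕ} {z : ℕ} (hs : (A ++ z :: B).Pairwise (· < ·)) :
    (∀ a ∈ A, a < z) ∧ (∀ b ∈ B, z < b) := by
  rw [List.pairwise_append] at hs
  obtain ⟨-, h2, h3⟩ := hs
  rw [List.pairwise_cons] at h2
  exact ⟨fun a ha => h3 a ha z (by simp), fun b hb => h2.1 b hb⟩

lemma map_replace {A B : List ℕ} {z x : ℕ} (hA : z ∉ A) (hB : z ∉ B) :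
    (A ++ z :: B).map (fun w => if w = z then x else w) = A ++ x :: B := by
  have key : ∀ l : List ℕ, z ∉ l → l.map (fun w => if w = z then x else w) = l := by
    intro l hl
    induction l with
    | nil => rfl
    | cons a l ih =>
      simp only [List.mem_cons, not_or] at hl
      simp only [List.map_cons, ih hl.2, if_neg (fun h : a = z => hl.1 h.symm)]
  simp [List.map_append, key A hA, key B hB]

lemma sublist_weaken {p : List ℕ} (q : List ℕ) {t : List ℕ} (h : t.Sublist p) :
    t.Sublist (p ++ q) := h.trans (p.sublist_append_left q)

lemma sublist_pair {p : List ℕ} {y : ℕ} (x : ℕ) (hy : y ∈ p) :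
    [y, x].Sublist (p ++ [x]) := by
  have : ([y] ++ [x]).Sublist (p ++ [x]) :=
    (List.singleton_sublist.mpr hy).append (List.Sublist.refl [x])
  simpa using this

lemma sublist_triple {p s : List ℕ} {y z x : ℕ} (h : [y, z].Sublist p) :
    [y, z, x].Sublist (p ++ x :: s) := by
  have : ([y, z] ++ [x]).Sublist (p ++ x :: s) :=
    h.append (by simp)
  simpa using this

end Row2Proof
namespace Row2Proof

def tab (r1 r2 : List ℕ) : List (List ℕ) :=
  if r2.isEmpty then (if r1.isEmpty then [] else [r1]) else [r1, r2]

lemma row2_tab (r1 r2 : List ℕ) : Row2 (tab r1 r2) = r2.toFinset := by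
  unfold tab Row2
  rcases r2 with _ | ⟨y, r2⟩
  · rcases r1 with _ | _ <;> simp
  · simp

def stp (x : ℕ) (st : List ℕ × List ℕ) : List ℕ × List ℕ :=
  match st.1.find? (fun y => decide (x < y)) with
  | none => (st.1 ++ [x], st.2)
  | some z => (st.1.map fun w => if w = z then x else w, st.2 ++ [z])

structure GS (p r1 r2 : List ℕ) : Prop where
  s1 : r1.Pairwise (· < ·)
  s2 : r2.Pairwise (· < ·)
  perm : (r1 ++ r2).Perm p
  hist : ∀ y ∈ r2, ∀ z ∈ r1, z < y →
      ([y, z].Sublist p ∨ ∃ x0, [y, x0].Sublist p ∧ z ≤ x0 ∧ x0 < y)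

lemma perm1 {r1 r2 p : List ℕ} (x : ℕ) (h : (r1 ++ r2).Perm p) :
    ((r1 ++ [x]) ++ r2).Perm (p ++ [x]) := by
  rw [← Multiset.coe_eq_coe] at h ⊢
  simp only [← Multiset.coe_add, ← Multiset.cons_coe, ← Multiset.singleton_add,
    Multiset.coe_nil, add_zero] at h ⊢
  rw [← h]; abel

lemma perm2 {A B r2 p : List ℕ} {x z : ℕ} (h : ((A ++ z :: B) ++ r2).Perm p) :
    ((A ++ x :: B) ++ (r2 ++ [z])).Perm (p ++ [x]) := by
  rw [← Multiset.coe_eq_coe] at h ⊢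
  simp only [← Multiset.coe_add, ← Multiset.cons_coe, ← Multiset.singleton_add,
    Multiset.coe_nil, add_zero] at h ⊢
  rw [← h]; abel

lemma RSKList_append_single (p : List ℕ) (x : ℕ) :
    RSKList (p ++ [x]) = rowInsert (RSKList p) x := by
  unfold RSKList
  rw [List.foldl_append]
  rfl

theorem step_main {l p s r1 r2 : List ℕ} {x : ℕ}
    (hAv : Av l) (hN : l.Nodup) (hl : l = p ++ x :: s)
    (h : GS p r1 r2) (ht : RSKList p = tab r1 r2) :
    GS (p ++ [x]) (stp x (r1, r2)).1 (stp x (r1, r2)).2 ∧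
      RSKList (p ++ [x]) = tab (stp x (r1, r2)).1 (stp x (r1, r2)).2 ∧
      ∀ z, r1.find? (fun y => decide (x < y)) = some z → ∀ y ∈ r2, y < z := by
  subst hl
  have hpN : p.Nodup := (p.sublist_append_left (x :: s)).nodup hN
  have hxp : x ∉ p := by
    intro hx
    exact (List.disjoint_of_nodup_append hN) hx (by simp)
  have h12N : (r1 ++ r2).Nodup := hpN.perm h.perm.symm
  have hmem1 : ∀ y ∈ r1, y ∈ p := fun y hy => h.perm.mem_iff.mp (by simp [hy])
  have hmem2 : ∀ y ∈ r2, y ∈ p := fun y hy => h.perm.mem_iff.mp (by simp [hy])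
  have hR : RSKList (p ++ [x]) = rowInsert (tab r1 r2) x := by
    rw [RSKList_append_single, ht]
  cases e : r1.find? (fun y => decide (x < y)) with
  | none =>
    have hle : ∀ y ∈ r1, y ≤ x := find?_blt_none.mp e
    have hlt : ∀ y ∈ r1, y < x := fun y hy =>
      lt_of_le_of_ne (hle y hy) (fun hyx => hxp (hyx ▸ hmem1 y hy))
    have hstp : stp x (r1, r2) = (r1 ++ [x], r2) := by simp [stp, e]
    rw [hstp]
    refine ⟨⟨?_, h.s2, perm1 x h.perm, ?_⟩, ?_, ?_⟩
    · exact List.pairwise_append.mpr ⟨h.s1, by simp, by simpa using hlt⟩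
    · intro y hy z hz hzy
      rcases List.mem_append.mp hz with hz1 | hzx
      · rcases h.hist y hy z hz1 hzy with hc | ⟨x0, hs0, h1, h2⟩
        · exact Or.inl (sublist_weaken [x] hc)
        · exact Or.inr ⟨x0, sublist_weaken [x] hs0, h1, h2⟩
      · have hzx' : z = x := by simpa using hzx
        subst hzx'
        exact Or.inl (sublist_pair z (hmem2 y hy))
    · rw [hR]
      rcases r2 with _ | ⟨y2, r2t⟩
      · rcases r1 with _ | ⟨y1, r1t⟩
        · simp [tab, RSKList, rowInsert]
        · simp [tab, rowInsert, e]
      · simp [tab, rowInsert, e]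
    · intro z hz
      cases hz
  | some z =>
    obtain ⟨A, B, hAB, hAle, hxz⟩ := sorted_split h.s1 e
    subst hAB
    have hsAB := h.s1
    obtain ⟨hAz, hBz⟩ := sorted_decomp hsAB
    have hzr1 : z ∈ A ++ z :: B := by simp
    have hzp : z ∈ p := hmem1 z hzr1
    have r1N : (A ++ z :: B).Nodup := (List.nodup_append'.mp h12N).1
    have hznAB : z ∉ A ∧ z ∉ B := by
      rcases List.nodup_append'.mp r1N with ⟨hA, hzB, hdisj⟩
      exact ⟨fun hz => hdisj hz (by simp), (List.nodup_cons.mp hzB).1⟩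
    have hAlt : ∀ a ∈ A, a < x := fun a ha =>
      lt_of_le_of_ne (hAle a ha) (fun hax => hxp (hax ▸ hmem1 a (by simp [ha])))
    have key5 : ∀ y ∈ r2, y < z := by
      intro y hy
      by_contra hyz
      have hzy : z < y := by
        have hne : z ≠ y := fun hzy =>
          (List.disjoint_of_nodup_append h12N) hzr1 (hzy ▸ hy)
        omega
      rcases h.hist y hy z hzr1 hzy with hc | ⟨x0, hs0, h1, h2⟩
      · exact hAv y z x (sublist_triple hc) ⟨hxz, hzy⟩
      · exact hAv y x0 x (sublist_triple hs0) ⟨by omega, h2⟩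
    have hstp : stp x (A ++ z :: B, r2) = (A ++ x :: B, r2 ++ [z]) := by
      simp only [stp, e]
      rw [map_replace hznAB.1 hznAB.2]
    rw [hstp]
    have hxB : ∀ b ∈ B, x < b := fun b hb => lt_trans hxz (hBz b hb)
    refine ⟨⟨?_, ?_, perm2 h.perm, ?_⟩, ?_, ?_⟩
    · obtain ⟨sA, szB, cross⟩ := List.pairwise_append.mp hsAB
      refine List.pairwise_append.mpr ⟨sA, ?_, ?_⟩
      · exact List.pairwise_cons.mpr ⟨hxB, (List.Pairwise.of_cons szB : B.Pairwise (· < ·))⟩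
      · intro a ha b hb
        rcases List.mem_cons.mp hb with rfl | hbB
        · exact hAlt a ha
        · exact cross a ha b (by simp [hbB])
    · refine List.pairwise_append.mpr ⟨h.s2, by simp, fun a ha b hb => by
        rcases List.mem_singleton.mp hb with rfl
        exact key5 a ha⟩

    · intro y hy z2 hz2 hlt2
      rcases List.mem_append.mp hy with hy2 | hyz
      · rcases List.mem_append.mp hz2 with hz2A | hz2xB
        · exact Or.imp (sublist_weaken [x])
            (fun ⟨x0, a, b, c⟩ => ⟨x0, sublist_weaken [x] a, b, c⟩)
            (h.hist y hy2 z2 (by simp [hz2A]) hlt2)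
        · rcases List.mem_cons.mp hz2xB with rfl | hz2B
          · exact Or.inl (sublist_pair z2 (hmem2 y hy2))
          · exact Or.imp (sublist_weaken [x])
              (fun ⟨x0, a, b, c⟩ => ⟨x0, sublist_weaken [x] a, b, c⟩)
              (h.hist y hy2 z2 (by simp [hz2B]) hlt2)
      · rcases List.mem_singleton.mp hyz with rfl
        rcases List.mem_append.mp hz2 with hz2A | hz2xB
        · exact Or.inr ⟨x, sublist_pair x hzp, hAle z2 hz2A, hxz⟩
        · rcases List.mem_cons.mp hz2xB with rfl | hz2B
          · exact Or.inr ⟨z2, sublist_pair z2 hzp, le_refl z2, hxz⟩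
          · exact absurd (hBz z2 hz2B) (by omega)
    · rw [hR]
      rcases r2 with _ | ⟨y2, r2t⟩
      · simp [tab, rowInsert, e, map_replace hznAB.1 hznAB.2]
      · have hfind2 : (y2 :: r2t).find? (fun y => decide (z < y)) = none :=
          find?_blt_none.mpr (fun y hy => le_of_lt (key5 y hy))
        simp [tab, rowInsert, e, hfind2, map_replace hznAB.1 hznAB.2]
    · intro z' hz'
      obtain rfl : z = z' := by simpa using hz'
      exact key5

end Row2Proof
namespace Row2Proof

def CInv (r1 r2 r1' r2' : List ℕ) : Prop :=
  r2.toFinset ⊆ r2'.toFinset ∧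
    (r1 = r1' ∨ ∃ A m B, r1 = A ++ m :: B ∧ r1' = A ++ B ∧ m ∈ r2')

lemma stp_eq_none {r1 r2 : List ℕ} {x : ℕ}
    (e : r1.find? (fun y => decide (x < y)) = none) :
    stp x (r1, r2) = (r1 ++ [x], r2) := by simp [stp, e]

lemma stp_eq_some {r1 r2 : List ℕ} {x z : ℕ}
    (e : r1.find? (fun y => decide (x < y)) = some z) :
    stp x (r1, r2) = (r1.map fun w => if w = z then x else w, r2 ++ [z]) := by
  simp [stp, e]

lemma toFinset_mono {r2 r2' : List ℕ} (z : ℕ) (h : r2.toFinset ⊆ r2'.toFinset) :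
    (r2 ++ [z]).toFinset ⊆ (r2' ++ [z]).toFinset := by
  simp only [List.toFinset_append]
  exact Finset.union_subset_union h (Finset.Subset.refl _)

lemma cinv_step {r1 r2 r1' r2' : List ℕ} {x : ℕ}
    (hs1 : r1.Pairwise (· < ·)) (hs1' : r1'.Pairwise (· < ·))
    (hN1 : r1.Nodup) (hN1' : r1'.Nodup)
    (hxm : ∀ m ∈ r2', x ≠ m)
    (hC : CInv r1 r2 r1' r2') :
    CInv (stp x (r1, r2)).1 (stp x (r1, r2)).2
      (stp x (r1', r2')).1 (stp x (r1', r2')).2 := by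
  obtain ⟨hsub, hdis⟩ := hC
  rcases hdis with rfl | ⟨A, m, B, h1, h2, hm⟩
  · -- identical first rows
    cases e : r1.find? (fun y => decide (x < y)) with
    | none =>
      rw [stp_eq_none (r2 := r2) e, stp_eq_none (r2 := r2') e]
      exact ⟨hsub, Or.inl rfl⟩
    | some z =>
      rw [stp_eq_some (r2 := r2) e, stp_eq_some (r2 := r2') e]
      exact ⟨toFinset_mono z hsub, Or.inl rfl⟩
  · subst h1; subst h2
    -- structural facts
    have hmA : m ∉ A := by
      rcases List.nodup_append'.mp hN1 with ⟨-, -, hd⟩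
      exact fun hmem => hd hmem (by simp)
    have hmB : m ∉ B := by
      rcases List.nodup_append'.mp hN1 with ⟨-, hzB, -⟩
      exact (List.nodup_cons.mp hzB).1
    have hdisAB : List.Disjoint A B := List.disjoint_of_nodup_append hN1'
    have hnA : A.Nodup := (List.nodup_append'.mp hN1').1
    have hnB : B.Nodup := (List.nodup_append'.mp hN1').2.1
    have hsA : A.Pairwise (· < ·) := (List.pairwise_append.mp hs1').1
    have hsB : B.Pairwise (· < ·) := (List.pairwise_append.mp hs1').2.1
    obtain ⟨hAm, hmBlt⟩ := sorted_decomp hs1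
    have hxm' : x ≠ m := hxm m hm
    cases eA : A.find? (fun y => decide (x < y)) with
    | some a0 =>
      obtain ⟨A1, A2, hA12, hA1le, hxa0⟩ := sorted_split hsA eA
      have ha0A : a0 ∈ A := List.mem_of_find?_eq_some eA
      have hA12' : A = A1 ++ a0 :: A2 := hA12
      have ha0nA1 : a0 ∉ A1 := by
        have := hA12 ▸ hnA
        rcases List.nodup_append'.mp this with ⟨-, -, hd⟩
        exact fun hmem => hd hmem (by simp)
      have ha0nA2 : a0 ∉ A2 := by
        have := hA12 ▸ hnA
        rcases List.nodup_append'.mp this with ⟨-, hzB, -⟩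
        exact (List.nodup_cons.mp hzB).1
      have ha0m : a0 ≠ m := fun h => hmA (h ▸ ha0A)
      have ha0B : a0 ∉ B := fun h => hdisAB ha0A h
      have e1 : (A ++ m :: B).find? (fun y => decide (x < y)) = some a0 := by
        rw [List.find?_append, eA]; rfl
      have e2 : (A ++ B).find? (fun y => decide (x < y)) = some a0 := by
        rw [List.find?_append, eA]; rfl
      rw [stp_eq_some (r2 := r2) e1, stp_eq_some (r2 := r2') e2]
      have hr1 : A ++ m :: B = (A1 ++ a0 :: (A2 ++ m :: B)) := by simp [hA12']
      have hr2 : A ++ B = (A1 ++ a0 :: (A2 ++ B)) := by simp [hA12']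
      rw [hr1, hr2, map_replace ha0nA1 (by simp [ha0nA2, ha0m, ha0B]),
        map_replace ha0nA1 (by simp [ha0nA2, ha0B])]
      refine ⟨toFinset_mono a0 hsub, Or.inr ⟨A1 ++ x :: A2, m, B, by simp, by simp,
        by simp [hm]⟩⟩
    | none =>
      have hAle : ∀ a ∈ A, a ≤ x := find?_blt_none.mp eA
      by_cases hxmlt : x < m
      · have e1 : (A ++ m :: B).find? (fun y => decide (x < y)) = some m := by
          rw [List.find?_append, eA, Option.none_or,
            List.find?_cons_of_pos (by simpa using hxmlt)]
        cases hB : B with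
        | nil =>
          subst hB
          have e2 : (A ++ ([] : List ℕ)).find? (fun y => decide (x < y)) = none := by
            rw [List.find?_append, eA]; rfl
          rw [stp_eq_some (r2 := r2) e1, stp_eq_none (r2 := r2') e2,
            map_replace hmA (by simp)]
          refine ⟨?_, Or.inl (by simp)⟩
          simp only [List.toFinset_append]
          refine Finset.union_subset (hsub.trans ?_) ?_ <;> simp [hm]
        | cons b0 B' =>
          subst hB
          have hmb0 : m < b0 := hmBlt b0 (by simp)
          have e2 : (A ++ b0 :: B').find? (fun y => decide (x < y)) = some b0 := by
            rw [List.find?_append, eA, Option.none_or,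
              List.find?_cons_of_pos (by simp; omega)]
          have hb0A : b0 ∉ A := fun h => hdisAB h (by simp)
          have hb0B' : b0 ∉ B' := (List.nodup_cons.mp hnB).1
          rw [stp_eq_some (r2 := r2) e1, stp_eq_some (r2 := r2') e2,
            map_replace hmA hmB, map_replace hb0A hb0B']
          refine ⟨?_, Or.inr ⟨A ++ [x], b0, B', by simp, by simp, by simp⟩⟩
          simp only [List.toFinset_append]
          refine Finset.union_subset (hsub.trans Finset.subset_union_left) ?_
          simp [hm]
      · have hmx : m < x := by omega
        have e0 : (A ++ m :: B).find? (fun y => decide (x < y))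
            = B.find? (fun y => decide (x < y)) := by
          rw [List.find?_append, eA, Option.none_or,
            List.find?_cons_of_neg (by simp; omega)]
        have e0' : (A ++ B).find? (fun y => decide (x < y))
            = B.find? (fun y => decide (x < y)) := by
          rw [List.find?_append, eA, Option.none_or]
        cases eB : B.find? (fun y => decide (x < y)) with
        | none =>
          rw [stp_eq_none (r2 := r2) (e0.trans eB), stp_eq_none (r2 := r2') (e0'.trans eB)]
          exact ⟨hsub, Or.inr ⟨A, m, B ++ [x], by simp, by simp, hm⟩⟩
        | some z =>
          obtain ⟨B1, B2, hB12, hB1le, hxzlt⟩ := sorted_split hsB eB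
          have hzB : z ∈ B := List.mem_of_find?_eq_some eB
          have hznB1 : z ∉ B1 := by
            have := hB12 ▸ hnB
            rcases List.nodup_append'.mp this with ⟨-, -, hd⟩
            exact fun hmem => hd hmem (by simp)
          have hznB2 : z ∉ B2 := by
            have := hB12 ▸ hnB
            rcases List.nodup_append'.mp this with ⟨-, hzB', -⟩
            exact (List.nodup_cons.mp hzB').1
          have hzA : z ∉ A := fun h => hdisAB h hzB
          have hzm : z ≠ m := fun h => hmB (h ▸ hzB)
          have hu : A ++ m :: B = (A ++ m :: B1) ++ z :: B2 := by simp [hB12]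
          have hw : A ++ B = (A ++ B1) ++ z :: B2 := by simp [hB12]
          rw [stp_eq_some (r2 := r2) (e0.trans eB), stp_eq_some (r2 := r2') (e0'.trans eB), hu, hw,
            map_replace (by simp [hzA, hzm, hznB1]) hznB2,
            map_replace (by simp [hzA, hznB1]) hznB2]
          refine ⟨toFinset_mono z hsub, Or.inr ⟨A, m, B1 ++ x :: B2, by simp,
            by simp, by simp [hm]⟩⟩

end Row2Proof
namespace Row2Proof

lemma GS_nil : GS [] [] [] := ⟨by simp, by simp, by simp, by simp⟩

theorem exists_GS {l : List ℕ} (hAv : Av l) (hN : l.Nodup) :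
    ∀ p s, l = p ++ s → ∃ r1 r2, GS p r1 r2 ∧ RSKList p = tab r1 r2 := by
  intro p
  induction p using List.reverseRecOn with
  | nil => exact fun s _ => ⟨[], [], GS_nil, rfl⟩
  | append_singleton p x ih =>
    intro s hl
    obtain ⟨r1, r2, hGS, ht⟩ := ih (x :: s) (by simpa using hl)
    obtain ⟨hGS', ht', -⟩ :=
      step_main hAv hN (by simpa using hl) hGS ht
    exact ⟨_, _, hGS', ht'⟩


theorem couple : ∀ (s l l' p p' r1 r2 r1' r2' : List ℕ),
    Av l → Av l' → l.Nodup → l'.Nodup → l = p ++ s → l' = p' ++ s →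
    GS p r1 r2 → GS p' r1' r2' → RSKList p = tab r1 r2 → RSKList p' = tab r1' r2' →
    CInv r1 r2 r1' r2' →
    Row2 (RSKList l) ⊆ Row2 (RSKList l') := by
  intro s
  induction s with
  | nil =>
    intro l l' p p' r1 r2 r1' r2' _ _ _ _ hl hl' _ _ ht ht' hC
    rw [List.append_nil] at hl hl'
    subst hl; subst hl'
    rw [ht, ht', row2_tab, row2_tab]
    exact hC.1
  | cons x s ih =>
    intro l l' p p' r1 r2 r1' r2' hAv hAv' hN hN' hl hl' hGS hGS' ht ht' hC
    obtain ⟨hsub, hdis⟩ := hC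
    have hl2 : l = (p ++ [x]) ++ s := by simp [hl]
    have hl2' : l' = (p' ++ [x]) ++ s := by simp [hl']
    obtain ⟨hGSu, htu, keyu⟩ := step_main hAv hN (by simpa using hl) hGS ht
    obtain ⟨hGSw, htw, keyw⟩ := step_main hAv' hN' (by simpa using hl') hGS' ht'
    refine ih l l' (p ++ [x]) (p' ++ [x]) _ _ _ _ hAv hAv' hN hN' hl2 hl2'
      hGSu hGSw htu htw ?_
    have hN2 : (p ++ x :: s).Nodup := hl ▸ hN
    have hN2' : (p' ++ x :: s).Nodup := hl' ▸ hN'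
    have hpN : p.Nodup := (p.sublist_append_left (x :: s)).nodup hN2
    have hpN' : p'.Nodup := (p'.sublist_append_left (x :: s)).nodup hN2'
    have hN1 : r1.Nodup :=
      (List.nodup_append'.mp (hpN.perm hGS.perm.symm)).1
    have hN1' : r1'.Nodup :=
      (List.nodup_append'.mp (hpN'.perm hGS'.perm.symm)).1
    have hxp' : x ∉ p' := fun hx =>
      (List.disjoint_of_nodup_append hN2') hx (by simp)
    have hxm : ∀ m ∈ r2', x ≠ m := by
      intro m hm hxm
      exact hxp' (hGS'.perm.mem_iff.mp (by simp [hxm ▸ hm]))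
    exact cinv_step hGS.s1 hGS'.s1 hN1 hN1' hxm ⟨hsub, hdis⟩

end Row2Proof
namespace Row2Proof

theorem row2_swap {l l' p s : List ℕ} {a b : ℕ} (hab : a < b)
    (hl : l = p ++ a :: b :: s) (hl' : l' = p ++ b :: a :: s)
    (hAv : Av l) (hAv' : Av l') (hN : l.Nodup) (hN' : l'.Nodup) :
    Row2 (RSKList l) ⊆ Row2 (RSKList l') := by
  obtain ⟨R, T, hGS, ht⟩ := exists_GS hAv hN p (a :: b :: s) hl
  have hN2 : (p ++ a :: b :: s).Nodup := hl ▸ hN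
  have hpN : p.Nodup := (p.sublist_append_left _).nodup hN2
  have hanp : a ∉ p := fun h => (List.disjoint_of_nodup_append hN2) h (by simp)
  have hbnp : b ∉ p := fun h => (List.disjoint_of_nodup_append hN2) h (by simp)
  have hRp : ∀ y ∈ R, y ∈ p := fun y hy => hGS.perm.mem_iff.mp (by simp [hy])
  have hRN : R.Nodup := (List.nodup_append'.mp (hpN.perm hGS.perm.symm)).1
  have hu1 := step_main hAv hN hl hGS ht
  have hw1 := step_main hAv' hN' hl' hGS ht
  have hu2 := step_main hAv hN (show l = (p ++ [a]) ++ b :: s by simp [hl])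
    hu1.1 hu1.2.1
  have hw2 := step_main hAv' hN' (show l' = (p ++ [b]) ++ a :: s by simp [hl'])
    hw1.1 hw1.2.1
  refine couple s l l' ((p ++ [a]) ++ [b]) ((p ++ [b]) ++ [a]) _ _ _ _ hAv hAv'
    hN hN' (by simp [hl]) (by simp [hl']) hu2.1 hw2.1 hu2.2.1 hw2.2.1 ?_
  cases e : R.find? (fun y => decide (a < y)) with
  | none =>
    have hRlt : ∀ y ∈ R, y < a := fun y hy =>
      lt_of_le_of_ne (find?_blt_none.mp e y hy) (fun h => hanp (h ▸ hRp y hy))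
    have hbR : b ∉ R := fun h => hbnp (hRp b h)
    have ew1f : R.find? (fun y => decide (b < y)) = none :=
      find?_blt_none.mpr (fun y hy => le_of_lt (lt_trans (hRlt y hy) hab))
    have ha1 : stp a (R, T) = (R ++ [a], T) := stp_eq_none e
    have eu2 : (R ++ [a]).find? (fun y => decide (b < y)) = none := by
      rw [List.find?_append, ew1f, Option.none_or]
      exact find?_blt_none.mpr (by intro y hy; simp at hy; omega)
    have ha2 : stp b (R ++ [a], T) = ((R ++ [a]) ++ [b], T) := stp_eq_none eu2
    have hb1 : stp b (R, T) = (R ++ [b], T) := stp_eq_none ew1f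
    have ew2 : (R ++ [b]).find? (fun y => decide (a < y)) = some b := by
      rw [List.find?_append, e, Option.none_or]
      simp [hab]
    have hb2 : stp a (R ++ [b], T) = (R ++ [a], T ++ [b]) := by
      rw [stp_eq_some ew2,
        show R ++ [b] = R ++ b :: ([] : List ℕ) from rfl,
        map_replace hbR (by simp)]
    simp only [ha1, ha2, hb1, hb2]
    refine ⟨?_, Or.inr ⟨R ++ [a], b, [], by simp, by simp, by simp⟩⟩
    simp only [List.toFinset_append]
    exact Finset.subset_union_left
  | some z =>
    obtain ⟨C, D, hR, hCle, haz⟩ := sorted_split hGS.s1 e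
    subst hR
    obtain ⟨hCz, hzD⟩ := sorted_decomp hGS.s1
    have hnC : C.Nodup := (List.nodup_append'.mp hRN).1
    have hnzD : (z :: D).Nodup := (List.nodup_append'.mp hRN).2.1
    have hnD : D.Nodup := (List.nodup_cons.mp hnzD).2
    have hzC : z ∉ C := fun h => (List.disjoint_of_nodup_append hRN) h (by simp)
    have hzD' : z ∉ D := (List.nodup_cons.mp hnzD).1
    have hzp : z ∈ p := hRp z (by simp)
    have hza : z ≠ a := fun h => hanp (h ▸ hzp)
    have hzb : z ≠ b := fun h => hbnp (h ▸ hzp)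
    have hClt : ∀ c ∈ C, c < a := fun c hc =>
      lt_of_le_of_ne (hCle c hc) (fun h => hanp (h ▸ hRp c (by simp [hc])))
    have eC : C.find? (fun y => decide (a < y)) = none :=
      find?_blt_none.mpr (fun c hc => le_of_lt (hClt c hc))
    have eCb : C.find? (fun y => decide (b < y)) = none :=
      find?_blt_none.mpr (fun c hc => by have := hClt c hc; omega)
    have ha1 : stp a (C ++ z :: D, T) = (C ++ a :: D, T ++ [z]) := by
      rw [stp_eq_some e, map_replace hzC hzD']
    rcases Nat.lt_or_ge z b with hzb' | hzb'
    · -- z < b : states re-converge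
      cases eD : D.find? (fun y => decide (b < y)) with
      | none =>
        have eu2 : (C ++ a :: D).find? (fun y => decide (b < y)) = none := by
          rw [List.find?_append, eCb, Option.none_or,
            List.find?_cons_of_neg (by simp; omega), eD]
        have ha2 : stp b (C ++ a :: D, T ++ [z]) = ((C ++ a :: D) ++ [b], T ++ [z]) :=
          stp_eq_none eu2
        have ew1f : (C ++ z :: D).find? (fun y => decide (b < y)) = none := by
          rw [List.find?_append, eCb, Option.none_or,
            List.find?_cons_of_neg (by simp; omega), eD]
        have hb1 : stp b (C ++ z :: D, T) = ((C ++ z :: D) ++ [b], T) := stp_eq_none ew1f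
        have ew2 : ((C ++ z :: D) ++ [b]).find? (fun y => decide (a < y)) = some z := by
          rw [List.find?_append, e]; rfl
        have hb2 : stp a ((C ++ z :: D) ++ [b], T) = (C ++ a :: (D ++ [b]), T ++ [z]) := by
          rw [stp_eq_some ew2,
            show (C ++ z :: D) ++ [b] = C ++ z :: (D ++ [b]) by simp,
            map_replace hzC (by simp [hzD', hzb])]
        simp only [ha1, ha2, hb1, hb2]
        exact ⟨Finset.Subset.refl _, Or.inl (by simp)⟩
      | some z2 =>
        have hsD : D.Pairwise (· < ·) :=
          (List.pairwise_cons.mp ((List.pairwise_append.mp hGS.s1).2.1)).2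
        obtain ⟨D1, D2, hD, hD1le, hbz2⟩ := sorted_split hsD eD
        subst hD
        have hz2D : z2 ∈ D1 ++ z2 :: D2 := by simp
        have hnD1 : z2 ∉ D1 := by
          rcases List.nodup_append'.mp hnD with ⟨-, -, hd⟩
          exact fun h => hd h (by simp)
        have hnD2 : z2 ∉ D2 := by
          rcases List.nodup_append'.mp hnD with ⟨-, h2, -⟩
          exact (List.nodup_cons.mp h2).1
        have hz2C : z2 ∉ C := fun h => (List.disjoint_of_nodup_append hRN) h (by simp)
        have hz2p : z2 ∈ p := hRp z2 (by simp)
        have hz2a : z2 ≠ a := fun h => hanp (h ▸ hz2p)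
        have hz2b : z2 ≠ b := fun h => hbnp (h ▸ hz2p)
        have hzz2 : z ≠ z2 := fun h => hzD' (h ▸ hz2D)
        have hzsplit : z ∉ D1 ∧ z ∉ D2 :=
          ⟨fun h => hzD' (by simp [h]), fun h => hzD' (by simp [h])⟩
        have eu2 : (C ++ a :: (D1 ++ z2 :: D2)).find? (fun y => decide (b < y)) = some z2 := by
          rw [List.find?_append, eCb, Option.none_or,
            List.find?_cons_of_neg (by simp; omega), eD]
        have ha2 : stp b (C ++ a :: (D1 ++ z2 :: D2), T ++ [z])
            = ((C ++ a :: D1) ++ b :: D2, (T ++ [z]) ++ [z2]) := by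
          rw [stp_eq_some eu2,
            show C ++ a :: (D1 ++ z2 :: D2) = (C ++ a :: D1) ++ z2 :: D2 by simp,
            map_replace (by simp [hz2C, hz2a, hnD1]) hnD2]
        have ew1 : (C ++ z :: (D1 ++ z2 :: D2)).find? (fun y => decide (b < y)) = some z2 := by
          rw [List.find?_append, eCb, Option.none_or,
            List.find?_cons_of_neg (by simp; omega), eD]
        have hb1 : stp b (C ++ z :: (D1 ++ z2 :: D2), T)
            = ((C ++ z :: D1) ++ b :: D2, T ++ [z2]) := by
          rw [stp_eq_some ew1,
            show C ++ z :: (D1 ++ z2 :: D2) = (C ++ z :: D1) ++ z2 :: D2 by simp,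
            map_replace (by simp [hz2C, hnD1, Ne.symm hzz2]) hnD2]
        have ew2 : ((C ++ z :: D1) ++ b :: D2).find? (fun y => decide (a < y)) = some z := by
          rw [show (C ++ z :: D1) ++ b :: D2 = C ++ z :: (D1 ++ b :: D2) by simp,
            List.find?_append, eC, Option.none_or,
            List.find?_cons_of_pos (by simpa using haz)]
        have hb2 : stp a ((C ++ z :: D1) ++ b :: D2, T ++ [z2])
            = (C ++ a :: (D1 ++ b :: D2), (T ++ [z2]) ++ [z]) := by
          rw [stp_eq_some ew2,
            show (C ++ z :: D1) ++ b :: D2 = C ++ z :: (D1 ++ b :: D2) by simp,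
            map_replace hzC (by simp [hzsplit.1, hzsplit.2, hzb])]
        simp only [ha1, ha2, hb1, hb2]
        refine ⟨?_, Or.inl (by simp)⟩
        intro t ht
        simp only [List.toFinset_append, Finset.mem_union] at ht ⊢
        tauto
    · -- b < z : impossible by the appending property of the w-run
      have hbzlt : b < z := by omega
      have ew1 : (C ++ z :: D).find? (fun y => decide (b < y)) = some z := by
        rw [List.find?_append, eCb, Option.none_or,
          List.find?_cons_of_pos (by simpa using hbzlt)]
      have hb1 : stp b (C ++ z :: D, T) = (C ++ b :: D, T ++ [z]) := by
        rw [stp_eq_some ew1, map_replace hzC hzD']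
      have ew2 : (C ++ b :: D).find? (fun y => decide (a < y)) = some b := by
        rw [List.find?_append, eC, Option.none_or,
          List.find?_cons_of_pos (by simpa using hab)]
      exfalso
      have hkey := hw2.2.2
      simp only [hb1] at hkey
      have := hkey b ew2 z (by simp)
      omega

end Row2Proof
namespace Row2Proof

lemma nodup_oneLine {n : ℕ} (w : Equiv.Perm (Fin n)) : (oneLine w).Nodup := by
  refine List.nodup_ofFn.mpr ?_
  intro i j hij
  exact w.injective (Fin.val_injective hij)

lemma av_oneLine {n : ℕ} {w : Equiv.Perm (Fin n)} (hfc : FullyCommutative w) :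
    Av (oneLine w) := by
  rintro a b c hsub ⟨h1, h2⟩
  rw [List.sublist_iff_exists_fin_orderEmbedding_get_eq] at hsub
  obtain ⟨f, hf⟩ := hsub
  have hlen : (oneLine w).length = n := List.length_ofFn
  set i0 : Fin n := Fin.cast hlen (f ⟨0, by norm_num⟩) with hi0
  set i1 : Fin n := Fin.cast hlen (f ⟨1, by norm_num⟩) with hi1
  set i2 : Fin n := Fin.cast hlen (f ⟨2, by norm_num⟩) with hi2
  have hv : ∀ (k : Fin 3) (hk : (k : ℕ) < ([a,b,c] : List ℕ).length),
      [a,b,c].get ⟨k, hk⟩ = (w (Fin.cast hlen (f ⟨k, hk⟩)) : ℕ) := by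
    intro k hk
    rw [hf ⟨k, hk⟩]
    simp only [oneLine, List.get_ofFn]
  have ha : a = (w i0 : ℕ) := hv 0 (by norm_num)
  have hb : b = (w i1 : ℕ) := hv 1 (by norm_num)
  have hc : c = (w i2 : ℕ) := hv 2 (by norm_num)
  apply hfc
  refine ⟨i0, i1, i2, ?_, ?_, ?_, ?_⟩
  · rw [Fin.lt_def]
    exact f.strictMono (by rw [Fin.lt_def]; norm_num)
  · rw [Fin.lt_def]
    exact f.strictMono (by rw [Fin.lt_def]; norm_num)
  · rw [Fin.lt_def]; omega
  · rw [Fin.lt_def]; omega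

lemma simpleTr_apply {n i : ℕ} (h : i + 1 < n) (j : Fin n) :
    ((simpleTr i h) j : ℕ) =
      if (j : ℕ) = i then i + 1 else if (j : ℕ) = i + 1 then i else (j : ℕ) := by
  unfold simpleTr
  rw [Equiv.swap_apply_def]
  simp only [Fin.ext_iff]
  split_ifs <;> rfl

lemma simpleTr_invol {n i : ℕ} (h : i + 1 < n) (j : Fin n) :
    simpleTr i h (simpleTr i h j) = j := Equiv.swap_apply_self _ _ _

lemma swap_lt {n i : ℕ} (h : i + 1 < n) {p q : Fin n} (hpq : p < q)
    (hne : ¬((p : ℕ) = i ∧ (q : ℕ) = i + 1)) :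
    simpleTr i h p < simpleTr i h q := by
  have hp := simpleTr_apply h p
  have hq := simpleTr_apply h q
  have hqn := q.isLt
  have hpn := p.isLt
  rw [Fin.lt_def] at hpq ⊢
  rw [hp, hq]
  split_ifs <;> omega

lemma swap_ne_pair {n i : ℕ} (h : i + 1 < n) {p q : Fin n} (hpq : p < q)
    (hx : simpleTr i h p = ⟨i, by omega⟩ ∧ simpleTr i h q = ⟨i + 1, h⟩) : False := by
  have h1 : p = simpleTr i h ⟨i, by omega⟩ := by rw [← hx.1, simpleTr_invol]
  have h2 : q = simpleTr i h ⟨i + 1, h⟩ := by rw [← hx.2, simpleTr_invol]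
  have e1 : simpleTr i h ⟨i, by omega⟩ = ⟨i + 1, h⟩ := Equiv.swap_apply_left _ _
  have e2 : simpleTr i h ⟨i + 1, h⟩ = ⟨i, by omega⟩ := Equiv.swap_apply_right _ _
  rw [e1] at h1; rw [e2] at h2
  rw [h1, h2, Fin.lt_def] at hpq
  simp at hpq

lemma invCount_mul_simpleTr {n i : ℕ} (u : Equiv.Perm (Fin n)) (h : i + 1 < n)
    (ha : u ⟨i, by omega⟩ < u ⟨i + 1, h⟩) :
    invCount (u * simpleTr i h) = invCount u + 1 := by
  classical
  set s := simpleTr i h with hs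
  have hss : ∀ j, s (s j) = j := simpleTr_invol h
  have happ : ∀ j, (u * s) j = u (s j) := fun j => rfl
  set fi : Fin n := ⟨i, by omega⟩ with hfi
  set fi1 : Fin n := ⟨i + 1, h⟩ with hfi1
  have hsfi : s fi = fi1 := Equiv.swap_apply_left _ _
  have hsfi1 : s fi1 = fi := Equiv.swap_apply_right _ _
  set X : Finset (Fin n × Fin n) :=
    Finset.univ.filter fun p => p.1 < p.2 ∧ (u * s) p.2 < (u * s) p.1 with hX
  set Y : Finset (Fin n × Fin n) :=
    Finset.univ.filter fun p => p.1 < p.2 ∧ u p.2 < u p.1 with hY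
  have hfi_lt : fi < fi1 := by rw [Fin.lt_def]; simp [hfi, hfi1]
  have hx0 : (fi, fi1) ∈ X := by
    simp only [hX, Finset.mem_filter, Finset.mem_univ, true_and]
    refine ⟨hfi_lt, ?_⟩
    rw [happ, happ, hsfi, hsfi1]
    exact ha
  have hy0 : (fi, fi1) ∉ Y := by
    simp only [hY, Finset.mem_filter, Finset.mem_univ, true_and]
    rintro ⟨-, hlt⟩
    exact absurd ha (not_lt.mpr (le_of_lt hlt))
  have hne_of_mem : ∀ {p q : Fin n × Fin n}, p ≠ q ∨ True := fun {p q} => Or.inr trivial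
  have hcard : (X.erase (fi, fi1)).card = (Y.erase (fi, fi1)).card := by
    apply Finset.card_nbij' (fun pq => (s pq.1, s pq.2)) (fun pq => (s pq.1, s pq.2))
    · intro pq hpq
      rw [Finset.mem_coe, Finset.mem_erase] at hpq ⊢
      obtain ⟨hne, hmem⟩ := hpq
      simp only [hX, hY, Finset.mem_filter, Finset.mem_univ, true_and] at hmem ⊢
      obtain ⟨hlt, hval⟩ := hmem
      have hnep : ¬((pq.1 : ℕ) = i ∧ (pq.2 : ℕ) = i + 1) := by
        rintro ⟨e1, e2⟩
        exact hne (Prod.ext (Fin.ext e1) (Fin.ext e2))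
      refine ⟨fun hcc => swap_ne_pair h hlt (by
          rw [Prod.mk.injEq] at hcc; exact ⟨hcc.1, hcc.2⟩), swap_lt h hlt hnep, ?_⟩
      rw [happ, happ] at hval
      exact hval
    · intro pq hpq
      rw [Finset.mem_coe, Finset.mem_erase] at hpq ⊢
      obtain ⟨hne, hmem⟩ := hpq
      simp only [hX, hY, Finset.mem_filter, Finset.mem_univ, true_and] at hmem ⊢
      obtain ⟨hlt, hval⟩ := hmem
      have hnep : ¬((pq.1 : ℕ) = i ∧ (pq.2 : ℕ) = i + 1) := by
        rintro ⟨e1, e2⟩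
        exact hne (Prod.ext (Fin.ext e1) (Fin.ext e2))
      refine ⟨fun hcc => swap_ne_pair h hlt (by
          rw [Prod.mk.injEq] at hcc; exact ⟨hcc.1, hcc.2⟩), swap_lt h hlt hnep, ?_⟩
      rw [happ, happ, hss, hss]
      exact hval
    · intro pq _; dsimp only; rw [hss, hss]
    · intro pq _; dsimp only; rw [hss, hss]
  have e1 : (X.erase (fi, fi1)).card + 1 = X.card := Finset.card_erase_add_one hx0
  have e2 : Y.erase (fi, fi1) = Y := Finset.erase_eq_of_notMem hy0
  have hXc : invCount (u * s) = X.card := rfl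
  have hYc : invCount u = Y.card := rfl
  rw [hXc, hYc, ← e1, hcard, e2]

end Row2Proof
namespace Row2Proof

lemma cover_data {n : ℕ} {u w : Equiv.Perm (Fin n)} (hc : RWCovers u w) :
    ∃ i, ∃ h : i + 1 < n, w = u * simpleTr i h ∧
      u ⟨i, by omega⟩ < u ⟨i + 1, h⟩ := by
  obtain ⟨i, h, heq, hinv⟩ := hc
  refine ⟨i, h, heq, ?_⟩
  have hne : (⟨i, by omega⟩ : Fin n) ≠ ⟨i + 1, h⟩ := by simp [Fin.ext_iff]
  rcases lt_trichotomy (u ⟨i, by omega⟩) (u ⟨i + 1, h⟩) with hlt | heqq | hgt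
  · exact hlt
  · exact absurd (u.injective heqq) hne
  · exfalso
    have hsfi : simpleTr i h ⟨i, by omega⟩ = ⟨i + 1, h⟩ := Equiv.swap_apply_left _ _
    have hsfi1 : simpleTr i h ⟨i + 1, h⟩ = ⟨i, by omega⟩ := Equiv.swap_apply_right _ _
    have hw : w ⟨i, by omega⟩ < w ⟨i + 1, h⟩ := by
      rw [heq]
      show u (simpleTr i h ⟨i, by omega⟩) < u (simpleTr i h ⟨i + 1, h⟩)
      rw [hsfi, hsfi1]
      exact hgt
    have h2 := invCount_mul_simpleTr w h hw
    have h3 : w * simpleTr i h = u := by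
      rw [heq, mul_assoc]
      have e : simpleTr i h * simpleTr i h = 1 := Equiv.swap_mul_self _ _
      rw [e, mul_one]
    rw [h3] at h2
    omega

lemma cover_FC {n : ℕ} {u w : Equiv.Perm (Fin n)} (hc : RWCovers u w)
    (hw : FullyCommutative w) : FullyCommutative u := by
  obtain ⟨i, h, heq, ha⟩ := cover_data hc
  rintro ⟨p, q, r, hpq, hqr, h1, h2⟩
  have hss := simpleTr_invol h
  have hval : ∀ j, w (simpleTr i h j) = u j := fun j => by
    rw [heq]
    show u (simpleTr i h (simpleTr i h j)) = u j
    rw [hss]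
  have hnpq : ¬((p : ℕ) = i ∧ (q : ℕ) = i + 1) := by
    rintro ⟨e1, e2⟩
    have hlt : u p < u q := by
      have hup : u p = u ⟨i, by omega⟩ := congrArg u (Fin.ext e1)
      have huq : u q = u ⟨i + 1, h⟩ := congrArg u (Fin.ext e2)
      rw [hup, huq]
      exact ha
    exact absurd h2 (not_lt.mpr (le_of_lt hlt))
  have hnqr : ¬((q : ℕ) = i ∧ (r : ℕ) = i + 1) := by
    rintro ⟨e1, e2⟩
    have hlt : u q < u r := by
      have huq : u q = u ⟨i, by omega⟩ := congrArg u (Fin.ext e1)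
      have hur : u r = u ⟨i + 1, h⟩ := congrArg u (Fin.ext e2)
      rw [huq, hur]
      exact ha
    exact absurd h1 (not_lt.mpr (le_of_lt hlt))
  exact hw ⟨simpleTr i h p, simpleTr i h q, simpleTr i h r,
    swap_lt h hpq hnpq, swap_lt h hqr hnqr,
    by rw [hval, hval]; exact h1, by rw [hval, hval]; exact h2⟩

lemma oneLine_split {n : ℕ} (v : Equiv.Perm (Fin n)) {i : ℕ} (h : i + 1 < n) :
    oneLine v = (oneLine v).take i ++ (v ⟨i, by omega⟩ : ℕ) ::
      (v ⟨i + 1, h⟩ : ℕ) :: (oneLine v).drop (i + 2) := by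
  have hlen : (oneLine v).length = n := List.length_ofFn
  conv_lhs => rw [← List.take_append_drop i (oneLine v)]
  congr 1
  rw [List.drop_eq_getElem_cons (by omega), List.drop_eq_getElem_cons (by omega)]
  congr 1
  · simp only [oneLine, List.getElem_ofFn]
  · congr 1
    simp only [oneLine, List.getElem_ofFn]

lemma oneLine_swap {n : ℕ} (u : Equiv.Perm (Fin n)) {i : ℕ} (h : i + 1 < n) :
    oneLine (u * simpleTr i h) = (oneLine u).take i ++ (u ⟨i + 1, h⟩ : ℕ) ::
      (u ⟨i, by omega⟩ : ℕ) :: (oneLine u).drop (i + 2) := by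
  set w := u * simpleTr i h with hw
  have hfix : ∀ j : Fin n, (j : ℕ) ≠ i → (j : ℕ) ≠ i + 1 → w j = u j := by
    intro j hj1 hj2
    show u (simpleTr i h j) = u j
    congr 1
    apply Fin.ext
    rw [simpleTr_apply h, if_neg hj1, if_neg hj2]
  have hwi : w ⟨i, by omega⟩ = u ⟨i + 1, h⟩ :=
    congrArg u (Equiv.swap_apply_left _ _)
  have hwi1 : w ⟨i + 1, h⟩ = u ⟨i, by omega⟩ :=
    congrArg u (Equiv.swap_apply_right _ _)
  have htake : (oneLine w).take i = (oneLine u).take i := by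
    apply List.ext_getElem (by simp [oneLine])
    intro j h1 h2
    have hj : j < i ∧ j < n := by
      simpa [oneLine, Nat.lt_min] using h1
    rw [List.getElem_take, List.getElem_take]
    simp only [oneLine, List.getElem_ofFn]
    exact congrArg Fin.val (hfix ⟨j, hj.2⟩ (by simp; omega) (by simp; omega))
  have hdrop : (oneLine w).drop (i + 2) = (oneLine u).drop (i + 2) := by
    apply List.ext_getElem (by simp [oneLine])
    intro j h1 h2
    have hj : j < n - (i + 2) := by simpa [oneLine] using h1
    rw [List.getElem_drop, List.getElem_drop]
    simp only [oneLine, List.getElem_ofFn]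
    exact congrArg Fin.val (hfix ⟨i + 2 + j, by omega⟩ (by simp; omega) (by simp; omega))
  calc oneLine w
      = (oneLine w).take i ++ (w ⟨i, by omega⟩ : ℕ) ::
        (w ⟨i + 1, h⟩ : ℕ) :: (oneLine w).drop (i + 2) := oneLine_split w h
    _ = _ := by rw [htake, hdrop, hwi, hwi1]

lemma cover_row2 {n : ℕ} {u w : Equiv.Perm (Fin n)} (hc : RWCovers u w)
    (hw : FullyCommutative w) : Row2 (RSKP u) ⊆ Row2 (RSKP w) := by
  obtain ⟨i, h, heq, ha⟩ := cover_data hc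
  have hu : FullyCommutative u := cover_FC hc hw
  have hab : (u ⟨i, by omega⟩ : ℕ) < (u ⟨i + 1, h⟩ : ℕ) := ha
  have h1 := oneLine_split u h
  have h2 : oneLine w = (oneLine u).take i ++ (u ⟨i + 1, h⟩ : ℕ) ::
      (u ⟨i, by omega⟩ : ℕ) :: (oneLine u).drop (i + 2) := by
    rw [heq]; exact oneLine_swap u h
  exact row2_swap hab h1 h2 (av_oneLine hu) (av_oneLine hw)
    (nodup_oneLine u) (nodup_oneLine w)

lemma fc_of_le {n : ℕ} {v w : Equiv.Perm (Fin n)} (hle : RightWeakLE v w)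
    (hw : FullyCommutative w) : FullyCommutative v := by
  induction hle using Relation.ReflTransGen.head_induction_on with
  | refl => exact hw
  | head hcov _ ih => exact cover_FC hcov ih

lemma rw_le_row2 {n : ℕ} {v w : Equiv.Perm (Fin n)} (hw : FullyCommutative w)
    (hle : RightWeakLE v w) : Row2 (RSKP v) ⊆ Row2 (RSKP w) := by
  induction hle using Relation.ReflTransGen.head_induction_on with
  | refl => exact fun x hx => hx
  | head hcov hrest ih => exact (cover_row2 hcov (fc_of_le hrest hw)).trans ih

lemma perm_apply_inv_self {α : Type*} (w : Equiv.Perm α) (x : α) : w (w⁻¹ x) = x :=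
  w.apply_symm_apply x

lemma perm_inv_apply_self {α : Type*} (w : Equiv.Perm α) (x : α) : w⁻¹ (w x) = x :=
  w.symm_apply_apply x

lemma fc_inv {n : ℕ} {w : Equiv.Perm (Fin n)} (hw : FullyCommutative w) :
    FullyCommutative w⁻¹ := by
  rintro ⟨i, j, k, hij, hjk, h1, h2⟩
  refine hw ⟨w⁻¹ k, w⁻¹ j, w⁻¹ i, h1, h2, ?_, ?_⟩
  · rw [perm_apply_inv_self, perm_apply_inv_self]
    exact hij
  · rw [perm_apply_inv_self, perm_apply_inv_self]
    exact hjk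

lemma invCount_inv {n : ℕ} (w : Equiv.Perm (Fin n)) : invCount w⁻¹ = invCount w := by
  classical
  unfold invCount
  apply Finset.card_nbij' (fun pq => (w⁻¹ pq.2, w⁻¹ pq.1)) (fun pq => (w pq.2, w pq.1))
  · intro pq hpq
    simp only [Finset.mem_coe, Finset.mem_filter, Finset.mem_univ, true_and] at hpq ⊢
    obtain ⟨hlt, hval⟩ := hpq
    constructor
    · exact hval
    · rw [perm_apply_inv_self, perm_apply_inv_self]
      exact hlt
  · intro pq hpq
    simp only [Finset.mem_coe, Finset.mem_filter, Finset.mem_univ, true_and] at hpq ⊢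
    obtain ⟨hlt, hval⟩ := hpq
    constructor
    · exact hval
    · rw [perm_inv_apply_self, perm_inv_apply_self]
      exact hlt
  · intro pq _
    simp [perm_apply_inv_self]
  · intro pq _
    simp [perm_inv_apply_self]

lemma lw_to_rw {n : ℕ} {u v : Equiv.Perm (Fin n)} (hc : LWCovers u v) :
    RWCovers u⁻¹ v⁻¹ := by
  obtain ⟨i, h, heq, hinv⟩ := hc
  refine ⟨i, h, ?_, ?_⟩
  · rw [heq, mul_inv_rev,
      show (simpleTr i h)⁻¹ = simpleTr i h from Equiv.swap_inv _ _]
  · rw [invCount_inv, invCount_inv, hinv]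

end Row2Proof


/-- **Corollary.** For fully commutative `v ≤ w`: (a) in the right weak order,
`Row₂(P(v)) ⊆ Row₂(P(w))`; (b) in the left weak order, `Row₂(Q(v)) ⊆ Row₂(Q(w))`. -/
theorem row_two_monotone_weak_order {n : ℕ} (v w : Equiv.Perm (Fin n))
    (hv : FullyCommutative v) (hw : FullyCommutative w) :
    (RightWeakLE v w → Row2 (RSKP v) ⊆ Row2 (RSKP w)) ∧
    (LeftWeakLE v w → Row2 (RSKQ v) ⊆ Row2 (RSKQ w)) := by
  constructor
  · intro hle
    exact Row2Proof.rw_le_row2 hw hle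
  · intro hle
    have h' : RightWeakLE v⁻¹ w⁻¹ :=
      Relation.ReflTransGen.lift (fun x : Equiv.Perm (Fin n) => x⁻¹)
        (fun a b hab => Row2Proof.lw_to_rw hab) _ _ hle
    show Row2 (RSKP v⁻¹) ⊆ Row2 (RSKP w⁻¹)
    exact Row2Proof.rw_le_row2 (Row2Proof.fc_inv hw) h'
end

section
/- Let w be a fully commutative permutation in S_n and let ŵ be its boolean core (the unique boolean permutation with w = ŵ·w', ℓ(w) = ℓ(ŵ)+ℓ(w'), and supp(ŵ) = supp(w)). Then Row₁(P(ŵ)) ⊇ Row₁(P(w)) and Row₂(P(ŵ)) ⊆ Row₂(P(w)). -/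
namespace BCT


/-- Schensted insertion of `x` into a single row. -/
def step (r : List ℕ) (x : ℕ) : List ℕ :=
  match r.find? (fun y => decide (x < y)) with
  | none => r ++ [x]
  | some y => r.map fun z => if z = y then x else z

/-- The value bumped (if any) when inserting `x` into row `r`. -/
def bump1 (r : List ℕ) (x : ℕ) : Option ℕ := r.find? (fun y => decide (x < y))

lemma step_eq_none {r : List ℕ} {x : ℕ} (h : bump1 r x = none) : step r x = r ++ [x] := by
  unfold bump1 at h; unfold step; rw [h]

lemma step_eq_map {r : List ℕ} {x y : ℕ} (h : bump1 r x = some y) :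
    step r x = r.map fun z => if z = y then x else z := by
  unfold bump1 at h; unfold step; rw [h]

lemma bump1_none_iff {r : List ℕ} {x : ℕ} : bump1 r x = none ↔ ∀ y ∈ r, ¬ x < y := by
  simp [bump1, List.find?_eq_none]

lemma bump1_some_mem {r : List ℕ} {x y : ℕ} (h : bump1 r x = some y) : y ∈ r :=
  List.mem_of_find?_eq_some h

lemma bump1_some_lt {r : List ℕ} {x y : ℕ} (h : bump1 r x = some y) : x < y := by
  have := List.find?_some h; simpa using this

lemma bump1_some_min {r : List ℕ} {x y : ℕ} (hs : r.Pairwise (· < ·))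
    (h : bump1 r x = some y) : ∀ c ∈ r, x < c → y ≤ c := by
  induction r with
  | nil => simp [bump1] at h
  | cons d r ih =>
    by_cases hd : x < d
    · have hyd : y = d := by
        unfold bump1 at h
        rw [List.find?_cons_of_pos (by simpa using hd)] at h
        exact (Option.some.inj h).symm
      subst hyd
      intro c hc _
      rcases List.mem_cons.mp hc with hc | hc
      · omega
      · exact le_of_lt ((List.pairwise_cons.mp hs).1 c hc)
    · have h' : bump1 r x = some y := by
        unfold bump1 at h ⊢
        rwa [List.find?_cons_of_neg (by simpa using hd)] at h
      intro c hc hxc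
      rcases List.mem_cons.mp hc with hc | hc
      · omega
      · exact ih (List.pairwise_cons.mp hs).2 h' c hc hxc

lemma bump1_eq_some_of {r : List ℕ} {x y : ℕ} (hs : r.Pairwise (· < ·)) (hy : y ∈ r)
    (hxy : x < y) (hmin : ∀ c ∈ r, x < c → y ≤ c) : bump1 r x = some y := by
  induction r with
  | nil => simp at hy
  | cons d r ih =>
    by_cases hd : x < d
    · have hyd : y = d := by
        rcases List.mem_cons.mp hy with h | h
        · exact h
        · have h1 := (List.pairwise_cons.mp hs).1 y h
          have h2 := hmin d (List.mem_cons_self) hd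
          omega
      subst hyd
      unfold bump1; rw [List.find?_cons_of_pos (by simpa using hd)]
    · have hy' : y ∈ r := by
        rcases List.mem_cons.mp hy with h | h
        · exact absurd (h ▸ hxy) hd
        · exact h
      unfold bump1
      rw [List.find?_cons_of_neg (by simpa using hd)]
      exact ih (List.pairwise_cons.mp hs).2 hy'
        (fun c hc hxc => hmin c (List.mem_cons_of_mem _ hc) hxc)

lemma bump1_eq_none_of {r : List ℕ} {x : ℕ} (h : ∀ c ∈ r, ¬ x < c) : bump1 r x = none :=
  List.find?_eq_none.mpr (by simpa using h)

/-- Explicit form of a bumping step on a split row. -/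
lemma step_eq_some {r r1 r2 : List ℕ} {x y : ℕ} (h : bump1 r x = some y)
    (hnd : r.Nodup) (hr : r = r1 ++ y :: r2) : step r x = r1 ++ x :: r2 := by
  rw [step_eq_map h]
  have hnd' := hr ▸ hnd
  have hy1 : y ∉ r1 := by
    have := List.nodup_middle.mp hnd'; simp at this; tauto
  have hy2 : y ∉ r2 := by
    have := List.nodup_middle.mp hnd'; simp at this; tauto
  rw [hr]
  simp only [List.map_append, List.map_cons, if_pos rfl]
  have e1 : r1.map (fun z => if z = y then x else z) = r1.map id :=
    List.map_congr_left (fun a ha => if_neg (fun (h' : a = y) => hy1 (h' ▸ ha)))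
  have e2 : r2.map (fun z => if z = y then x else z) = r2.map id :=
    List.map_congr_left (fun a ha => if_neg (fun (h' : a = y) => hy2 (h' ▸ ha)))
  rw [e1, e2, List.map_id, List.map_id]
  simp

lemma sorted_split {r r1 r2 : List ℕ} {y : ℕ} (hs : r.Pairwise (· < ·))
    (hr : r = r1 ++ y :: r2) :
    (∀ c ∈ r1, c < y) ∧ (∀ c ∈ r2, y < c) := by
  subst hr
  rw [List.pairwise_append] at hs
  obtain ⟨h1, h2, h3⟩ := hs
  rw [List.pairwise_cons] at h2
  exact ⟨fun c hc => h3 c hc y (by simp), h2.1⟩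

lemma step_sorted {r : List ℕ} {x : ℕ} (hs : r.Pairwise (· < ·)) (hx : x ∉ r) :
    (step r x).Pairwise (· < ·) := by
  cases h : bump1 r x with
  | none =>
    rw [step_eq_none h]
    rw [List.pairwise_append]
    refine ⟨hs, by simp, ?_⟩
    intro a ha b hb
    simp at hb; subst hb
    have h1 := bump1_none_iff.mp h a ha
    have h2 : a ≠ b := fun hax => hx (hax ▸ ha)
    omega
  | some y =>
    obtain ⟨r1, r2, hr⟩ := List.append_of_mem (bump1_some_mem h)
    have hnd : r.Nodup := hs.nodup
    rw [step_eq_some h hnd hr]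
    obtain ⟨h1, h2⟩ := sorted_split hs hr
    have hmin := bump1_some_min hs h
    have hxy := bump1_some_lt h
    rw [List.pairwise_append]
    refine ⟨?_, ?_, ?_⟩
    · subst hr
      exact ((List.pairwise_append.mp hs).1)
    · rw [List.pairwise_cons]
      constructor
      · intro b hb; have := h2 b hb; omega
      · subst hr
        have := (List.pairwise_append.mp hs).2.1
        exact (List.pairwise_cons.mp this).2
    · intro a ha b hb
      have ha' : a ∈ r := by rw [hr]; simp [ha]
      have hay : a < y := h1 a ha
      have hax : ¬ x < a := fun hxa => absurd (hmin a ha' hxa) (by omega)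
      have haxne : a ≠ x := fun h' => hx (h' ▸ ha')
      simp at hb
      rcases hb with hb | hb
      · omega
      · have := h2 b hb; omega

lemma step_toFinset_none {r : List ℕ} {x : ℕ} (h : bump1 r x = none) :
    (step r x).toFinset = insert x r.toFinset := by
  rw [step_eq_none h]; ext z; simp

lemma step_toFinset_some {r : List ℕ} {x y : ℕ} (h : bump1 r x = some y) (hnd : r.Nodup) :
    (step r x).toFinset = insert x (r.toFinset.erase y) := by
  obtain ⟨r1, r2, hr⟩ := List.append_of_mem (bump1_some_mem h)
  rw [step_eq_some h hnd hr]
  have hnd' := hr ▸ hnd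
  have hy1 : y ∉ r1 := by
    have := List.nodup_middle.mp hnd'; simp at this; tauto
  have hy2 : y ∉ r2 := by
    have := List.nodup_middle.mp hnd'; simp at this; tauto
  ext z
  simp only [List.mem_toFinset, Finset.mem_insert, Finset.mem_erase, hr,
    List.mem_append, List.mem_cons]
  constructor
  · rintro (hz | hz | hz)
    · exact Or.inr ⟨fun e => hy1 (e ▸ hz), Or.inl hz⟩
    · exact Or.inl hz
    · exact Or.inr ⟨fun e => hy2 (e ▸ hz), Or.inr (Or.inr hz)⟩
  · rintro (hz | ⟨hzy, (hz | hz | hz)⟩)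
    · exact Or.inr (Or.inl hz)
    · exact Or.inl hz
    · exact absurd hz hzy
    · exact Or.inr (Or.inr hz)

lemma step_toFinset_subset {r : List ℕ} {x : ℕ} :
    (step r x).toFinset ⊆ insert x r.toFinset := by
  cases h : bump1 r x with
  | none => rw [step_eq_none h]; intro z hz; simp at hz ⊢; tauto
  | some y =>
    rw [step_eq_map h]
    intro z hz
    simp at hz ⊢
    obtain ⟨a, ha, haz⟩ := hz
    by_cases hay : a = y
    · subst hay; rw [if_pos rfl] at haz; exact Or.inl haz.symm
    · rw [if_neg hay] at haz; exact Or.inr (haz ▸ ha)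



def simStep : List ℕ × List ℕ → ℕ → List ℕ × List ℕ :=
  fun s x => (step s.1 x, s.2 ++ (bump1 s.1 x).toList)

def sim (s : List ℕ × List ℕ) (l : List ℕ) : List ℕ × List ℕ := l.foldl simStep s

def fstRow (l : List ℕ) : List ℕ := (sim ([], []) l).1
def bseq (l : List ℕ) : List ℕ := (sim ([], []) l).2

lemma sim_append (s : List ℕ × List ℕ) (l1 l2 : List ℕ) :
    sim s (l1 ++ l2) = sim (sim s l1) l2 := List.foldl_append

lemma sim_fst (r bs : List ℕ) (l : List ℕ) : (sim (r, bs) l).1 = (sim (r, []) l).1 := by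
  induction l generalizing r bs with
  | nil => rfl
  | cons x l ih =>
    show (sim (simStep (r, bs) x) l).1 = (sim (simStep (r, []) x) l).1
    simp only [simStep, List.nil_append]
    rw [ih (step r x) (bs ++ (bump1 r x).toList), ih (step r x) ((bump1 r x).toList)]

lemma sim_snd (r bs : List ℕ) (l : List ℕ) :
    (sim (r, bs) l).2 = bs ++ (sim (r, []) l).2 := by
  induction l generalizing r bs with
  | nil => simp [sim]
  | cons x l ih =>
    show (sim (simStep (r, bs) x) l).2 = bs ++ (sim (simStep (r, []) x) l).2
    simp only [simStep, List.nil_append]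
    rw [ih (step r x) (bs ++ (bump1 r x).toList), ih (step r x) ((bump1 r x).toList)]
    rw [List.append_assoc]

lemma foldl_rowInsert_cons (m : List ℕ) : ∀ (r : List ℕ) (rest : List (List ℕ)),
    List.foldl rowInsert (r :: rest) m
      = (sim (r, []) m).1 :: List.foldl rowInsert rest (sim (r, []) m).2 := by
  induction m with
  | nil => intro r rest; simp [sim]
  | cons x m ih =>
    intro r rest
    show List.foldl rowInsert (rowInsert (r :: rest) x) m = _
    have hsim : sim (r, []) (x :: m) = sim (step r x, (bump1 r x).toList) m := rfl
    cases h : bump1 r x with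
    | none =>
      have hri : rowInsert (r :: rest) x = (step r x) :: rest := by
        rw [step_eq_none h]
        unfold bump1 at h; rw [rowInsert, h]
      rw [hri, ih, hsim, h]
      rfl
    | some y =>
      have hri : rowInsert (r :: rest) x = (step r x) :: rowInsert rest y := by
        rw [step_eq_map h]
        unfold bump1 at h; rw [rowInsert, h]
      rw [hri, ih, hsim, h]
      show _ = (sim (step r x, [y]) m).1 :: List.foldl rowInsert rest (sim (step r x, [y]) m).2
      rw [sim_fst (step r x) [y] m, sim_snd (step r x) [y] m]
      rfl

lemma sim_cons_zero (x : ℕ) (xs : List ℕ) : sim ([], []) (x :: xs) = sim ([x], []) xs := rfl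

lemma RSKList_getD0 (l : List ℕ) : (RSKList l).getD 0 [] = fstRow l := by
  cases l with
  | nil => rfl
  | cons x xs =>
    show (List.foldl rowInsert (rowInsert [] x) xs).getD 0 [] = _
    have h1 : rowInsert [] x = [x] :: [] := rfl
    rw [h1, foldl_rowInsert_cons]
    show (sim ([x], []) xs).1 = fstRow (x :: xs)
    unfold fstRow
    rw [sim_cons_zero]

lemma RSKList_struct (x : ℕ) (xs : List ℕ) :
    RSKList (x :: xs) = fstRow (x :: xs) :: RSKList (bseq (x :: xs)) := by
  show (List.foldl rowInsert (rowInsert [] x) xs) = _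
  have h1 : rowInsert [] x = [x] :: [] := rfl
  rw [h1, foldl_rowInsert_cons]
  unfold fstRow bseq RSKList
  rw [sim_cons_zero]

lemma RSKList_getD1 (l : List ℕ) : (RSKList l).getD 1 [] = fstRow (bseq l) := by
  cases l with
  | nil => rfl
  | cons x xs =>
    rw [RSKList_struct]
    show (RSKList (bseq (x :: xs))).getD 0 [] = _
    exact RSKList_getD0 _

/-- 321-pattern avoidance for lists. -/
def Av321 (l : List ℕ) : Prop := ∀ a b c : ℕ, [a, b, c].Sublist l → b < a → c < b → False

structure Inv (p r bs : List ℕ) : Prop where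
  rsorted : r.Pairwise (· < ·)
  content : (↑r + ↑bs : Multiset ℕ) = ↑p
  bsorted : bs.Pairwise (· < ·)
  far : ∀ z ∈ bs, ∀ c ∈ r, c < z → ∃ a b, c ≤ b ∧ b < a ∧ [a, b].Sublist p

lemma Inv.mem_r {p r bs : List ℕ} (hI : Inv p r bs) {c : ℕ} (hc : c ∈ r) : c ∈ p := by
  have : c ∈ (↑p : Multiset ℕ) := by
    rw [← hI.content]; simp [hc]
  simpa using this

lemma Inv.mem_bs {p r bs : List ℕ} (hI : Inv p r bs) {c : ℕ} (hc : c ∈ bs) : c ∈ p := by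
  have : c ∈ (↑p : Multiset ℕ) := by
    rw [← hI.content]; simp [hc]
  simpa using this

lemma Inv.disj {p r bs : List ℕ} (hI : Inv p r bs) (hnd : p.Nodup) {c : ℕ}
    (h1 : c ∈ r) (h2 : c ∈ bs) : False := by
  have hcount : Multiset.count c (↑p : Multiset ℕ) ≤ 1 :=
    Multiset.nodup_iff_count_le_one.mp (by simpa using hnd) c
  rw [← hI.content, Multiset.count_add] at hcount
  have c1 : 1 ≤ Multiset.count c (↑r : Multiset ℕ) := Multiset.one_le_count_iff_mem.mpr (by simpa using h1)
  have c2 : 1 ≤ Multiset.count c (↑bs : Multiset ℕ) := Multiset.one_le_count_iff_mem.mpr (by simpa using h2)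
  omega

lemma sublist_pair {z x : ℕ} {p : List ℕ} (hz : z ∈ p) : [z, x].Sublist (p ++ [x]) := by
  have h1 : [z].Sublist p := List.singleton_sublist.mpr hz
  exact h1.append (List.Sublist.refl [x])

lemma Inv.insert {p r bs : List ℕ} (hI : Inv p r bs) {x : ℕ} (hnd : (p ++ [x]).Nodup)
    (hav : Av321 (p ++ [x])) :
    Inv (p ++ [x]) (step r x) (bs ++ (bump1 r x).toList) := by
  have hpnd : p.Nodup := hnd.sublist (List.sublist_append_left _ _)
  have hxp : x ∉ p := by
    rw [List.nodup_append] at hnd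
    intro hx
    exact hnd.2.2 x hx x (by simp) rfl
  have hxr : x ∉ r := fun h => hxp (hI.mem_r h)
  have hrsorted' := step_sorted hI.rsorted hxr
  cases h : bump1 r x with
  | none =>
    refine ⟨hrsorted', ?_, ?_, ?_⟩
    · rw [step_eq_none h]
      simp only [Option.toList, List.append_nil]
      have hC := hI.content
      rw [Multiset.ext] at hC ⊢
      intro a
      have := hC a
      simp only [Multiset.count_add, Multiset.coe_count, List.count_append] at this ⊢
      omega
    · simpa using hI.bsorted
    · intro z hz c hc hcz
      simp only [Option.toList, List.append_nil] at hz
      rw [step_eq_none h, List.mem_append] at hc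
      rcases hc with hc | hc
      · obtain ⟨a, b, hab1, hab2, hab3⟩ := hI.far z hz c hc hcz
        exact ⟨a, b, hab1, hab2, hab3.trans (List.sublist_append_left _ _)⟩
      · simp at hc; subst hc
        exact ⟨z, c, le_refl _, hcz, sublist_pair (hI.mem_bs hz)⟩
  | some y =>
    have hy := bump1_some_mem h
    have hxy := bump1_some_lt h
    have hmin := bump1_some_min hI.rsorted h
    have hrnd : r.Nodup := hI.rsorted.nodup
    obtain ⟨r1, r2, hr⟩ := List.append_of_mem hy
    have hst := step_eq_some h hrnd hr
    obtain ⟨hlt1, hlt2⟩ := sorted_split hI.rsorted hr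
    have hyp : y ∈ p := hI.mem_r hy
    refine ⟨hrsorted', ?_, ?_, ?_⟩
    · rw [hst]
      simp only [Option.toList]
      have hC := hI.content
      rw [hr] at hC
      rw [Multiset.ext] at hC ⊢
      intro a
      have := hC a
      simp only [Multiset.count_add, Multiset.coe_count, List.count_append,
        List.count_cons] at this ⊢
      omega
    · simp only [Option.toList]
      rw [List.pairwise_append]
      refine ⟨hI.bsorted, by simp, ?_⟩
      intro z hz b hb
      simp at hb; rw [hb]
      by_contra hzy
      have hzy' : z ≠ y := fun e => hI.disj hpnd (e ▸ hy) hz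
      have hyz : y < z := by omega
      obtain ⟨a, b, hab1, hab2, hab3⟩ := hI.far z hz y hy hyz
      exact hav a b x (hab3.append (List.Sublist.refl [x])) hab2 (by omega)
    · intro z hz c hc hcz
      simp only [Option.toList, List.mem_append, List.mem_singleton] at hz
      rw [hst, List.mem_append, List.mem_cons] at hc
      have hzp : z ∈ p := by
        rcases hz with hz | hz
        · exact hI.mem_bs hz
        · rw [hz]; exact hyp
      rcases hc with hc | hc | hc
      · -- c ∈ r1
        have hcr : c ∈ r := by rw [hr]; simp [hc]
        rcases hz with hz | hz
        · obtain ⟨a, b, hab1, hab2, hab3⟩ := hI.far z hz c hcr hcz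
          exact ⟨a, b, hab1, hab2, hab3.trans (List.sublist_append_left _ _)⟩
        · rw [hz] at hcz
          have hcx : ¬ x < c := fun hxc => absurd (hmin c hcr hxc) (by omega)
          exact ⟨y, x, by omega, hxy, sublist_pair hyp⟩
      · -- c = x
        rw [hc] at hcz ⊢
        exact ⟨z, x, le_refl _, hcz, sublist_pair hzp⟩
      · -- c ∈ r2
        have hcr : c ∈ r := by rw [hr]; simp [hc]
        rcases hz with hz | hz
        · obtain ⟨a, b, hab1, hab2, hab3⟩ := hI.far z hz c hcr hcz
          exact ⟨a, b, hab1, hab2, hab3.trans (List.sublist_append_left _ _)⟩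
        · rw [hz] at hcz
          exact absurd (hlt2 c hc) (by omega)

lemma inv_nil : Inv [] [] [] := ⟨by simp, by simp, by simp, by simp⟩

lemma av321_sublist {l l' : List ℕ} (h : Av321 l) (hs : l'.Sublist l) : Av321 l' :=
  fun a b c hsub hba hcb => h a b c (hsub.trans hs) hba hcb

lemma inv_prefix {l : List ℕ} (hnd : l.Nodup) (hav : Av321 l) :
    ∀ p q : List ℕ, p ++ q = l → Inv p (sim ([], []) p).1 (sim ([], []) p).2 := by
  intro p
  induction p using List.reverseRecOn with
  | nil => intro q _; exact inv_nil
  | append_singleton p x ih =>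
    intro q hq
    have hpre : p ++ (x :: q) = l := by simpa [List.append_assoc] using hq
    have hI := ih (x :: q) hpre
    have hsub : (p ++ [x]).Sublist l := by
      rw [← hpre]
      exact (List.Sublist.refl p).append (List.cons_sublist_cons.mpr (List.nil_sublist q))
    have heq : sim ([], []) (p ++ [x]) = simStep (sim ([], []) p) x := by
      rw [sim_append]; rfl
    rw [heq]
    exact hI.insert (hnd.sublist hsub) (av321_sublist hav hsub)

lemma inv_full {l : List ℕ} (hnd : l.Nodup) (hav : Av321 l) : Inv l (fstRow l) (bseq l) :=
  inv_prefix hnd hav l [] (List.append_nil l)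

/-- folding a sorted list whose entries dominate the current row just appends. -/
lemma sim_sorted_all (m : List ℕ) : ∀ r bs, m.Pairwise (· < ·) →
    (∀ c ∈ r, ∀ z ∈ m, c < z) → sim (r, bs) m = (r ++ m, bs) := by
  induction m with
  | nil => intro r bs _ _; simp [sim]
  | cons x m ih =>
    intro r bs hs hlt
    have hb : bump1 r x = none :=
      bump1_eq_none_of (fun c hc => by have := hlt c hc x (by simp); omega)
    show sim (simStep (r, bs) x) m = _
    have hstep : simStep (r, bs) x = (r ++ [x], bs) := by
      simp [simStep, hb, step_eq_none hb]
    rw [hstep, ih]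
    · simp
    · exact (List.pairwise_cons.mp hs).2
    · intro c hc z hz
      rw [List.mem_append] at hc
      rcases hc with hc | hc
      · exact hlt c hc z (by simp [hz])
      · simp at hc; subst hc
        exact (List.pairwise_cons.mp hs).1 z hz

lemma fstRow_of_sorted {m : List ℕ} (hs : m.Pairwise (· < ·)) : fstRow m = m := by
  unfold fstRow
  rw [sim_sorted_all m [] [] hs (by simp)]
  simp

lemma bseq_of_sorted {m : List ℕ} (hs : m.Pairwise (· < ·)) : bseq m = [] := by
  unfold bseq
  rw [sim_sorted_all m [] [] hs (by simp)]

/-- The `REL` relation between the first rows of the two RSK computations. -/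
def Rel (rw_ ru : List ℕ) : Prop :=
  rw_.toFinset = ru.toFinset ∨
    ∃ v, v ∉ rw_.toFinset ∧ ru.toFinset = insert v rw_.toFinset

lemma rel_step {rw_ ru : List ℕ} {x : ℕ} (hsw : rw_.Pairwise (· < ·)) (hsu : ru.Pairwise (· < ·))
    (hxw : x ∉ rw_.toFinset) (hxu : x ∉ ru.toFinset) (hrel : Rel rw_ ru) :
    Rel (step rw_ x) (step ru x) := by
  have hndw : rw_.Nodup := hsw.nodup
  have hndu : ru.Nodup := hsu.nodup
  rcases hrel with heq | ⟨v, hv, hins⟩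
  · -- equal sets: the two steps produce equal sets
    left
    have hlists : rw_ = ru := List.Perm.eq_of_pairwise' hsw hsu
      (List.perm_of_nodup_nodup_toFinset_eq hndw hndu heq)
    rw [hlists]
  · -- r_u = r_w ∪ {v}
    have hvu : v ∈ ru.toFinset := by rw [hins]; exact Finset.mem_insert_self _ _
    have hvx : v ≠ x := fun e => hxu (e ▸ hvu)
    cases hw : bump1 rw_ x with
    | none =>
      have hallw : ∀ c ∈ rw_, c < x := by
        intro c hc
        have h1 := bump1_none_iff.mp hw c hc
        have h2 : c ≠ x := fun e => hxw (e ▸ List.mem_toFinset.mpr hc)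
        omega
      by_cases hvltx : v < x
      · -- all of r_u < x as well : both append
        have hu : bump1 ru x = none := by
          apply bump1_eq_none_of
          intro c hc
          have hc' : c ∈ ru.toFinset := List.mem_toFinset.mpr hc
          rw [hins] at hc'
          rcases Finset.mem_insert.mp hc' with hc' | hc'
          · omega
          · have := hallw c (List.mem_toFinset.mp hc'); omega
        right
        refine ⟨v, ?_, ?_⟩
        · rw [step_toFinset_none hw]
          simp only [Finset.mem_insert]
          push_neg
          exact ⟨hvx, fun h => hv h⟩
        · rw [step_toFinset_none hw, step_toFinset_none hu, hins]
          rw [Finset.insert_comm]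
      · -- x < v : u bumps v, sets become equal
        have hxv : x < v := by omega
        have hu : bump1 ru x = some v := by
          apply bump1_eq_some_of hsu (List.mem_toFinset.mp hvu) hxv
          intro c hc hxc
          have hc' : c ∈ ru.toFinset := List.mem_toFinset.mpr hc
          rw [hins] at hc'
          rcases Finset.mem_insert.mp hc' with hc' | hc'
          · omega
          · have := hallw c (List.mem_toFinset.mp hc'); omega
        left
        rw [step_toFinset_none hw, step_toFinset_some hu hndu, hins]
        rw [Finset.erase_insert hv]
    | some y =>
      have hyw : y ∈ rw_ := bump1_some_mem hw
      have hxy : x < y := bump1_some_lt hw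
      have hymin := bump1_some_min hsw hw
      have hyu : y ∈ ru.toFinset := by
        rw [hins]; exact Finset.mem_insert_of_mem (List.mem_toFinset.mpr hyw)
      have hvy : v ≠ y := fun e => hv (e ▸ List.mem_toFinset.mpr hyw)
      by_cases hmid : x < v ∧ v < y
      · -- u bumps v instead; new floating value is y
        have hu : bump1 ru x = some v := by
          apply bump1_eq_some_of hsu (List.mem_toFinset.mp hvu) hmid.1
          intro c hc hxc
          have hc' : c ∈ ru.toFinset := List.mem_toFinset.mpr hc
          rw [hins] at hc'
          rcases Finset.mem_insert.mp hc' with hc' | hc'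
          · omega
          · have := hymin c (List.mem_toFinset.mp hc') hxc; omega
        right
        refine ⟨y, ?_, ?_⟩
        · rw [step_toFinset_some hw hndw]
          simp only [Finset.mem_insert, Finset.mem_erase]
          push_neg
          refine ⟨by omega, fun h => absurd rfl h⟩
        · rw [step_toFinset_some hw hndw, step_toFinset_some hu hndu, hins]
          rw [Finset.erase_insert hv]
          ext z
          simp only [Finset.mem_insert, Finset.mem_erase, List.mem_toFinset]
          constructor
          · rintro (rfl | hz)
            · by_cases hzy : z = y
              · exact Or.inl hzy
              · exact Or.inr (Or.inl rfl)
            · by_cases hzy : z = y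
              · exact Or.inl hzy
              · exact Or.inr (Or.inr ⟨hzy, hz⟩)
          · rintro (rfl | rfl | ⟨hzy, hz⟩)
            · exact Or.inr hyw
            · exact Or.inl rfl
            · exact Or.inr hz
      · -- both bump y
        have hu : bump1 ru x = some y := by
          apply bump1_eq_some_of hsu (List.mem_toFinset.mp hyu) hxy
          intro c hc hxc
          have hc' : c ∈ ru.toFinset := List.mem_toFinset.mpr hc
          rw [hins] at hc'
          rcases Finset.mem_insert.mp hc' with hc' | hc'
          · subst hc'; omega
          · exact hymin c (List.mem_toFinset.mp hc') hxc
        right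
        refine ⟨v, ?_, ?_⟩
        · rw [step_toFinset_some hw hndw]
          simp only [Finset.mem_insert, Finset.mem_erase]
          push_neg
          exact ⟨hvx, fun _ => hv⟩
        · rw [step_toFinset_some hw hndw, step_toFinset_some hu hndu, hins]
          rw [Finset.erase_insert_of_ne hvy]
          rw [Finset.insert_comm]

lemma sim_fst_eq (l : List ℕ) : ∀ s : List ℕ × List ℕ, (sim s l).1 = List.foldl step s.1 l := by
  induction l with
  | nil => intro s; rfl
  | cons x l ih => intro s; exact ih _

lemma mem_step_of {r' : List ℕ} {x z : ℕ} (hz : z ∈ step r' x) : z = x ∨ z ∈ r' := by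
  have := step_toFinset_subset (List.mem_toFinset.mpr hz)
  rcases Finset.mem_insert.mp this with h | h
  · exact Or.inl h
  · exact Or.inr (List.mem_toFinset.mp h)

lemma not_mem_step {r' : List ℕ} {x z : ℕ} (hz : z ∉ r') (hzx : z ≠ x) : z ∉ step r' x :=
  fun h => by rcases mem_step_of h with h | h <;> [exact hzx h; exact hz h]

lemma toFinset_append_singleton (r : List ℕ) (x : ℕ) :
    (r ++ [x]).toFinset = insert x r.toFinset := by
  ext z; simp

lemma rel_fold (m : List ℕ) : ∀ rw_ ru, rw_.Pairwise (· < ·) → ru.Pairwise (· < ·) →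
    m.Nodup → (∀ x ∈ m, x ∉ rw_ ∧ x ∉ ru) → Rel rw_ ru →
    Rel (List.foldl step rw_ m) (List.foldl step ru m) := by
  induction m with
  | nil => intro _ _ _ _ _ _ h; exact h
  | cons x m ih =>
    intro rw_ ru hsw hsu hnd hfresh hrel
    have hxw := (hfresh x (by simp)).1
    have hxu := (hfresh x (by simp)).2
    show Rel (List.foldl step (step rw_ x) m) (List.foldl step (step ru x) m)
    apply ih
    · exact step_sorted hsw hxw
    · exact step_sorted hsu hxu
    · exact (List.nodup_cons.mp hnd).2
    · intro z hz
      have hne : z ≠ x := fun e => (List.nodup_cons.mp hnd).1 (e ▸ hz)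
      have h1 := (hfresh z (by simp [hz])).1
      have h2 := (hfresh z (by simp [hz])).2
      exact ⟨not_mem_step h1 hne, not_mem_step h2 hne⟩
    · exact rel_step hsw hsu (fun h => hxw (List.mem_toFinset.mp h))
        (fun h => hxu (List.mem_toFinset.mp h)) hrel

lemma genesis {r : List ℕ} {a b : ℕ} (hs : r.Pairwise (· < ·)) (ha : a ∉ r) (hb : b ∉ r)
    (hab : a < b) :
    (∃ y ∈ r, b < y) ∨ Rel (step (step r b) a) (step (step r a) b) := by
  by_cases hyb : ∃ y ∈ r, b < y
  · exact Or.inl hyb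
  push_neg at hyb
  -- all elements of r are < b (they are ≤ b and ≠ b)
  have hrb : ∀ c ∈ r, c < b := fun c hc => lt_of_le_of_ne (hyb c hc) (fun e => hb (e ▸ hc))
  have hBnone : bump1 r b = none := bump1_eq_none_of (fun c hc => by have := hrb c hc; omega)
  have hstepb : step r b = r ++ [b] := step_eq_none hBnone
  have hsb : (step r b).Pairwise (· < ·) := step_sorted hs hb
  right
  cases hA : bump1 r a with
  | none =>
    -- all elements of r are < a as well
    have hra : ∀ c ∈ r, c < a := by
      intro c hc
      have h1 := bump1_none_iff.mp hA c hc
      have h2 : c ≠ a := fun e => ha (e ▸ hc)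
      omega
    have hstepa : step r a = r ++ [a] := step_eq_none hA
    -- w-side : a bumps b out of r ++ [b]
    have hW : bump1 (step r b) a = some b := by
      apply bump1_eq_some_of hsb (by rw [hstepb]; simp) hab
      intro c hc hac
      rw [hstepb, List.mem_append] at hc
      rcases hc with hc | hc
      · have := hra c hc; omega
      · simp at hc; omega
    -- u-side : b is appended to r ++ [a]
    have hU : bump1 (step r a) b = none := by
      apply bump1_eq_none_of
      intro c hc
      rw [hstepa, List.mem_append] at hc
      rcases hc with hc | hc
      · have := hrb c hc; omega
      · simp at hc; omega
    right
    refine ⟨b, ?_, ?_⟩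
    · rw [step_toFinset_some hW (hsb.nodup)]
      simp only [Finset.mem_insert, Finset.mem_erase]
      push_neg
      exact ⟨by omega, fun h => absurd rfl h⟩
    · rw [step_toFinset_some hW (hsb.nodup), step_toFinset_none hU,
        hstepa, hstepb, toFinset_append_singleton, toFinset_append_singleton,
        Finset.erase_insert (fun h => hb (List.mem_toFinset.mp h))]
  | some ya =>
    have hya : ya ∈ r := bump1_some_mem hA
    have haya : a < ya := bump1_some_lt hA
    have hmins := bump1_some_min hs hA
    have hyab : ya < b := hrb ya hya
    -- w-side : b appended, then a bumps ya
    have hW : bump1 (step r b) a = some ya := by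
      apply bump1_eq_some_of hsb (by rw [hstepb]; simp [hya]) haya
      intro c hc hac
      rw [hstepb, List.mem_append] at hc
      rcases hc with hc | hc
      · exact hmins c hc hac
      · simp at hc; omega
    -- u-side : a bumps ya, then b is appended
    have hsu : (step r a).Pairwise (· < ·) := step_sorted hs ha
    have hU : bump1 (step r a) b = none := by
      apply bump1_eq_none_of
      intro c hc
      rcases mem_step_of hc with hc | hc
      · omega
      · have := hrb c hc; omega
    left
    rw [step_toFinset_some hW hsb.nodup, step_toFinset_none hU,
      step_toFinset_some hA hs.nodup, hstepb, toFinset_append_singleton]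
    have hbW : b ∉ r.toFinset := fun h => hb (List.mem_toFinset.mp h)
    have hyaW : ya ∈ r.toFinset := List.mem_toFinset.mpr hya
    rw [Finset.erase_insert_of_ne (by omega)]
    rw [Finset.insert_comm]

lemma core {p m : List ℕ} {a b : ℕ} (hab : a < b)
    (hnd : (p ++ b :: a :: m).Nodup) (hav : Av321 (p ++ b :: a :: m)) :
    (fstRow (p ++ b :: a :: m)).toFinset ⊆ (fstRow (p ++ a :: b :: m)).toFinset := by
  have hIp : Inv p (sim ([], []) p).1 (sim ([], []) p).2 :=
    inv_prefix hnd hav p (b :: a :: m) rfl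
  set r : List ℕ := (sim ([], []) p).1 with hrdef
  have hrs : r.Pairwise (· < ·) := hIp.rsorted
  have hrsubp : ∀ c ∈ r, c ∈ p := fun c hc => hIp.mem_r hc
  -- nodup decomposition
  rw [List.nodup_append] at hnd
  obtain ⟨hpnd, hqnd, hdisj⟩ := hnd
  rw [List.nodup_cons] at hqnd
  obtain ⟨hbq, hqnd⟩ := hqnd
  rw [List.nodup_cons] at hqnd
  obtain ⟨haq, hmnd⟩ := hqnd
  have hbp : b ∉ p := fun h => hdisj b h b (by simp) rfl
  have hap : a ∉ p := fun h => hdisj a h a (by simp) rfl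
  have hanb : a ≠ b := by omega
  have har : a ∉ r := fun h => hap (hrsubp a h)
  have hbr : b ∉ r := fun h => hbp (hrsubp b h)
  have hLrow : fstRow (p ++ b :: a :: m) = List.foldl step (step (step r b) a) m := by
    unfold fstRow
    rw [show p ++ b :: a :: m = p ++ (b :: a :: m) from rfl, sim_append, sim_fst_eq]
    rfl
  have hUrow : fstRow (p ++ a :: b :: m) = List.foldl step (step (step r a) b) m := by
    unfold fstRow
    rw [show p ++ a :: b :: m = p ++ (a :: b :: m) from rfl, sim_append, sim_fst_eq]
    rfl
  rcases genesis hrs har hbr hab with ⟨y, hy, hby⟩ | hrel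
  · -- the bad case yields a 321 pattern
    exfalso
    have hsub : [y, b, a].Sublist (p ++ b :: a :: m) := by
      have h1 : [y].Sublist p := List.singleton_sublist.mpr (hrsubp y hy)
      have h2 : [b, a].Sublist (b :: a :: m) :=
        List.cons_sublist_cons.mpr (List.cons_sublist_cons.mpr (List.nil_sublist m))
      exact h1.append h2
    exact hav y b a hsub hby hab
  · rw [hLrow, hUrow]
    have hsw : (step (step r b) a).Pairwise (· < ·) :=
      step_sorted (step_sorted hrs hbr) (not_mem_step har hanb)
    have hsu : (step (step r a) b).Pairwise (· < ·) :=
      step_sorted (step_sorted hrs har) (not_mem_step hbr (by omega))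
    have hfold := rel_fold m _ _ hsw hsu hmnd ?_ hrel
    · rcases hfold with heq | ⟨v, _, hins⟩
      · rw [heq]
      · rw [hins]; exact Finset.subset_insert _ _
    · intro z hz
      have hzp : z ∉ p := fun h => hdisj z h z (by simp [hz]) rfl
      have hzr : z ∉ r := fun h => hzp (hrsubp z h)
      have hza : z ≠ a := fun e => haq (e ▸ hz)
      have hzb : z ≠ b := fun e => hbq (e ▸ (by simp [hz] : z ∈ a :: m))
      exact ⟨not_mem_step (not_mem_step hzr hzb) hza,
        not_mem_step (not_mem_step hzr hza) hzb⟩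


section PermLevel

variable {n : ℕ}

lemma oneLine_length (w : Equiv.Perm (Fin n)) : (oneLine w).length = n := by
  simp [oneLine]

lemma oneLine_getElem (w : Equiv.Perm (Fin n)) (j : ℕ) (hj : j < n) :
    (oneLine w)[j]'(by simpa [oneLine] using hj) = (w ⟨j, hj⟩ : ℕ) := by
  simp [oneLine]

lemma oneLine_nodup (w : Equiv.Perm (Fin n)) : (oneLine w).Nodup := by
  rw [oneLine, List.nodup_ofFn]
  intro i j hij
  exact w.injective (Fin.val_injective hij)

lemma mem_oneLine (w : Equiv.Perm (Fin n)) (z : ℕ) : z ∈ oneLine w ↔ z < n := by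
  simp only [oneLine, List.mem_ofFn, Set.mem_range]
  constructor
  · rintro ⟨i, rfl⟩; exact (w i).isLt
  · intro hz; exact ⟨w⁻¹ ⟨z, hz⟩, by simp⟩

lemma av321_of_fc {w : Equiv.Perm (Fin n)} (hw : FullyCommutative w) : Av321 (oneLine w) := by
  intro a b c hsub hba hcb
  rw [List.sublist_iff_exists_fin_orderEmbedding_get_eq] at hsub
  obtain ⟨f, hf⟩ := hsub
  have hlen : (oneLine w).length = n := oneLine_length w
  have hg : ∀ k : Fin ([a, b, c].length), ((f k : ℕ) < n) := fun k => by
    have h1 := (f k).isLt; omega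
  set i : Fin n := ⟨f ⟨0, by norm_num⟩, hg _⟩ with hi
  set j : Fin n := ⟨f ⟨1, by norm_num⟩, hg _⟩ with hj
  set k : Fin n := ⟨f ⟨2, by norm_num⟩, hg _⟩ with hk
  have hval : ∀ (m : Fin ([a, b, c].length)) (x : Fin n),
      (x : ℕ) = (f m : ℕ) → (w x : ℕ) = [a, b, c].get m := by
    intro m x hx
    have h := hf m
    rw [List.get_eq_getElem, List.get_eq_getElem] at h
    simp only [oneLine, List.getElem_ofFn] at h
    rw [List.get_eq_getElem, h]
    exact congrArg (fun z : Fin n => ((w z : Fin n) : ℕ)) (Fin.ext hx)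
  have h0 : (w i : ℕ) = a := hval ⟨0, by norm_num⟩ i rfl
  have h1 : (w j : ℕ) = b := hval ⟨1, by norm_num⟩ j rfl
  have h2 : (w k : ℕ) = c := hval ⟨2, by norm_num⟩ k rfl
  apply hw
  refine ⟨i, j, k, ?_, ?_, ?_, ?_⟩
  · rw [Fin.lt_def]
    exact f.strictMono (show (⟨0, by norm_num⟩ : Fin 3) < ⟨1, by norm_num⟩ by
      rw [Fin.lt_def]; norm_num)
  · rw [Fin.lt_def]
    exact f.strictMono (show (⟨1, by norm_num⟩ : Fin 3) < ⟨2, by norm_num⟩ by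
      rw [Fin.lt_def]; norm_num)
  · rw [Fin.lt_def]; omega
  · rw [Fin.lt_def]; omega

/-- monotonicity of `simpleTr i` away from the pair `(i, i+1)`. -/
lemma simpleTr_mono {i : ℕ} (h : i + 1 < n) {p q : Fin n} (hpq : p < q)
    (hne : ¬((p : ℕ) = i ∧ (q : ℕ) = i + 1)) :
    simpleTr i h p < simpleTr i h q := by
  have e1 : simpleTr i h ⟨i, by omega⟩ = ⟨i + 1, h⟩ := Equiv.swap_apply_left _ _
  have e2 : simpleTr i h ⟨i + 1, h⟩ = ⟨i, by omega⟩ := Equiv.swap_apply_right _ _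
  have e3 : ∀ x : Fin n, (x : ℕ) ≠ i → (x : ℕ) ≠ i + 1 → simpleTr i h x = x := by
    intro x h1 h2
    exact Equiv.swap_apply_of_ne_of_ne (fun e => h1 (congrArg Fin.val e))
      (fun e => h2 (congrArg Fin.val e))
  rw [Fin.lt_def] at hpq
  rw [Fin.lt_def]
  by_cases hpI : (p : ℕ) = i
  · have hq1 : (q : ℕ) ≠ i + 1 := fun e => hne ⟨hpI, e⟩
    have hqI : (q : ℕ) ≠ i := by omega
    rw [show p = ⟨i, by omega⟩ from Fin.ext hpI, e1, e3 q hqI hq1]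
    show i + 1 < (q : ℕ)
    omega
  · by_cases hpI1 : (p : ℕ) = i + 1
    · have hq1 : (q : ℕ) ≠ i + 1 := by omega
      have hqI : (q : ℕ) ≠ i := by omega
      rw [show p = ⟨i + 1, h⟩ from Fin.ext hpI1, e2, e3 q hqI hq1]
      show i < (q : ℕ)
      omega
    · rw [e3 p hpI hpI1]
      by_cases hqI : (q : ℕ) = i
      · rw [show q = ⟨i, by omega⟩ from Fin.ext hqI, e1]
        show (p : ℕ) < i + 1
        omega
      · by_cases hqI1 : (q : ℕ) = i + 1
        · rw [show q = ⟨i + 1, h⟩ from Fin.ext hqI1, e2]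
          show (p : ℕ) < i
          omega
        · rw [e3 q hqI hqI1]
          exact hpq

lemma fc_of_swap {w : Equiv.Perm (Fin n)} {i : ℕ} (h : i + 1 < n)
    (hw : FullyCommutative w)
    (hdesc : (w ⟨i + 1, h⟩ : ℕ) < w ⟨i, by omega⟩) :
    FullyCommutative (w * simpleTr i h) := by
  rintro ⟨j1, j2, j3, h12, h23, hv32, hv21⟩
  have hasc : ((w * simpleTr i h) ⟨i, by omega⟩ : ℕ) < (w * simpleTr i h) ⟨i + 1, h⟩ := by
    show (w (simpleTr i h ⟨i, by omega⟩) : ℕ) < w (simpleTr i h ⟨i + 1, h⟩)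
    rw [show simpleTr i h ⟨i, by omega⟩ = ⟨i + 1, h⟩ from Equiv.swap_apply_left _ _,
      show simpleTr i h ⟨i + 1, h⟩ = ⟨i, by omega⟩ from Equiv.swap_apply_right _ _]
    exact hdesc
  have hnopair : ∀ {a b : Fin n}, (a : ℕ) = i → (b : ℕ) = i + 1 →
      ¬ ((w * simpleTr i h) b < (w * simpleTr i h) a) := by
    intro a b ea eb hlt
    have hin : i < n := by omega
    rw [show a = ⟨i, hin⟩ from Fin.ext ea] at hlt
    rw [show b = ⟨i + 1, h⟩ from Fin.ext eb] at hlt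
    have hasc' : (w (simpleTr i h ⟨i, hin⟩) : ℕ) < w (simpleTr i h ⟨i + 1, h⟩) := hasc
    have hlt2 : (w (simpleTr i h ⟨i + 1, h⟩) : ℕ) < w (simpleTr i h ⟨i, hin⟩) := hlt
    omega
  have hp12 : ¬((j1 : ℕ) = i ∧ (j2 : ℕ) = i + 1) :=
    fun ⟨e1, e2⟩ => hnopair e1 e2 hv21
  have hp23 : ¬((j2 : ℕ) = i ∧ (j3 : ℕ) = i + 1) :=
    fun ⟨e1, e2⟩ => hnopair e1 e2 hv32
  exact hw ⟨simpleTr i h j1, simpleTr i h j2, simpleTr i h j3,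
    simpleTr_mono h h12 hp12, simpleTr_mono h h23 hp23, hv32, hv21⟩

lemma simpleTr_invol {i : ℕ} (h : i + 1 < n) (x : Fin n) :
    simpleTr i h (simpleTr i h x) = x := Equiv.swap_apply_self _ _ _

lemma simpleTr_mul_self {i : ℕ} (h : i + 1 < n) :
    simpleTr i h * simpleTr i h = 1 := Equiv.swap_mul_self _ _

lemma invCount_swap_asc {w : Equiv.Perm (Fin n)} {i : ℕ} (h : i + 1 < n)
    (hasc : (w ⟨i, by omega⟩ : ℕ) < w ⟨i + 1, h⟩) :
    invCount (w * simpleTr i h) = invCount w + 1 := by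
  classical
  set t := simpleTr i h with ht
  set I : Fin n := ⟨i, by omega⟩ with hI
  set I1 : Fin n := ⟨i + 1, h⟩ with hI1
  set A := Finset.univ.filter
    (fun p : Fin n × Fin n => p.1 < p.2 ∧ (w * t) p.2 < (w * t) p.1) with hA
  set B := Finset.univ.filter
    (fun p : Fin n × Fin n => p.1 < p.2 ∧ w p.2 < w p.1) with hB
  have htI : t I = I1 := Equiv.swap_apply_left _ _
  have htI1 : t I1 = I := Equiv.swap_apply_right _ _
  have htt : ∀ x, t (t x) = x := simpleTr_invol h
  have hmemA : (I, I1) ∈ A := by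
    rw [hA, Finset.mem_filter]
    refine ⟨Finset.mem_univ _, show I < I1 from ?_, show (w * t) I1 < (w * t) I from ?_⟩
    · show i < i + 1
      omega
    · show w (t I1) < w (t I)
      rw [htI1, htI]
      show (w I : ℕ) < w I1
      exact hasc
  have hmemB : (I, I1) ∉ B := by
    rw [hB, Finset.mem_filter]
    rintro ⟨-, hlt⟩
    have hlt' : (w I1 : ℕ) < w I := hlt.2
    have h2 : (w I : ℕ) < w I1 := hasc
    omega
  have key : ∀ p : Fin n × Fin n, p.1 < p.2 → p ≠ (I, I1) → (t p.1 < t p.2 ∧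
      (t p.1, t p.2) ≠ (I, I1)) := by
    intro p hlt hne
    have hne' : ¬((p.1 : ℕ) = i ∧ (p.2 : ℕ) = i + 1) := by
      rintro ⟨e1, e2⟩
      apply hne
      have : p = (p.1, p.2) := rfl
      rw [this, show p.1 = I from Fin.ext e1, show p.2 = I1 from Fin.ext e2]
    refine ⟨simpleTr_mono h hlt hne', ?_⟩
    intro e
    have e1 : t p.1 = I := congrArg Prod.fst e
    have e2 : t p.2 = I1 := congrArg Prod.snd e
    have f1 : p.1 = I1 := by rw [← htt p.1, e1, htI]
    have f2 : p.2 = I := by rw [← htt p.2, e2, htI1]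
    rw [f1, f2] at hlt
    have hlt' : i + 1 < i := hlt
    omega
  have hcard : (A.erase (I, I1)).card = (B.erase (I, I1)).card := by
    apply Finset.card_nbij (fun p => (t p.1, t p.2))
    · intro p hp
      rw [Finset.mem_coe, Finset.mem_erase, hA, Finset.mem_filter] at hp
      obtain ⟨hpne, -, hplt, hpv⟩ := hp
      obtain ⟨hm, hne2⟩ := key p hplt hpne
      rw [Finset.mem_coe, Finset.mem_erase, hB, Finset.mem_filter]
      exact ⟨hne2, Finset.mem_univ _, hm, hpv⟩
    · intro p hp q hq he
      simp only [Prod.mk.injEq] at he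
      have h1 : p.1 = q.1 := by rw [← htt p.1, he.1, htt]
      have h2 : p.2 = q.2 := by rw [← htt p.2, he.2, htt]
      exact Prod.ext h1 h2
    · intro q hq
      simp only [Finset.coe_erase, Set.mem_diff, Finset.mem_coe] at hq
      obtain ⟨hqB, hqne⟩ := hq
      rw [hB, Finset.mem_filter] at hqB
      obtain ⟨-, hqlt, hqv⟩ := hqB
      have hqne' : q ≠ (I, I1) := by simpa using hqne
      obtain ⟨hm, hne2⟩ := key q hqlt hqne'
      refine ⟨(t q.1, t q.2), ?_, ?_⟩
      · simp only [Finset.coe_erase, Set.mem_diff, Finset.mem_coe]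
        constructor
        · rw [hA, Finset.mem_filter]
          refine ⟨Finset.mem_univ _, hm, ?_⟩
          show w (t (t q.2)) < w (t (t q.1))
          rw [htt, htt]
          exact hqv
        · simpa using hne2
      · show (t (t q.1), t (t q.2)) = q
        rw [htt, htt]
  have hAcard : A.card = (A.erase (I, I1)).card + 1 := by
    rw [Finset.card_erase_of_mem hmemA]
    have : 0 < A.card := Finset.card_pos.mpr ⟨_, hmemA⟩
    omega
  have hBcard : (B.erase (I, I1)).card = B.card := by
    rw [Finset.erase_eq_of_notMem hmemB]
  show A.card = B.card + 1
  omega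

lemma invCount_swap_desc {w : Equiv.Perm (Fin n)} {i : ℕ} (h : i + 1 < n)
    (hdesc : (w ⟨i + 1, h⟩ : ℕ) < w ⟨i, by omega⟩) :
    invCount (w * simpleTr i h) + 1 = invCount w := by
  have hasc : ((w * simpleTr i h) ⟨i, by omega⟩ : ℕ) < (w * simpleTr i h) ⟨i + 1, h⟩ := by
    show (w (simpleTr i h ⟨i, by omega⟩) : ℕ) < w (simpleTr i h ⟨i + 1, h⟩)
    rw [show simpleTr i h ⟨i, by omega⟩ = ⟨i + 1, h⟩ from Equiv.swap_apply_left _ _,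
      show simpleTr i h ⟨i + 1, h⟩ = ⟨i, by omega⟩ from Equiv.swap_apply_right _ _]
    exact hdesc
  have h2 := invCount_swap_asc (w := w * simpleTr i h) h hasc
  rw [mul_assoc, simpleTr_mul_self, mul_one] at h2
  omega

lemma invCount_mul_le (u v : Equiv.Perm (Fin n)) :
    invCount (u * v) ≤ invCount u + invCount v := by
  classical
  set A := Finset.univ.filter
    (fun p : Fin n × Fin n => p.1 < p.2 ∧ (u * v) p.2 < (u * v) p.1) with hA
  set Bu := Finset.univ.filter
    (fun p : Fin n × Fin n => p.1 < p.2 ∧ u p.2 < u p.1) with hBu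
  set Bv := Finset.univ.filter
    (fun p : Fin n × Fin n => p.1 < p.2 ∧ v p.2 < v p.1) with hBv
  have hcard : A.card ≤ (Bv.disjSum Bu).card := by
    apply Finset.card_le_card_of_injOn
      (fun p => if v p.2 < v p.1 then Sum.inl p else Sum.inr (v p.1, v p.2))
    · intro p hp
      rw [Finset.mem_coe, hA, Finset.mem_filter] at hp
      simp only [Finset.mem_coe]
      obtain ⟨-, hlt, hv⟩ := hp
      by_cases hc : v p.2 < v p.1
      · rw [if_pos hc]
        apply Finset.inl_mem_disjSum.mpr
        rw [hBv, Finset.mem_filter]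
        exact ⟨Finset.mem_univ _, hlt, hc⟩
      · rw [if_neg hc]
        apply Finset.inr_mem_disjSum.mpr
        rw [hBu, Finset.mem_filter]
        have hne : v p.1 ≠ v p.2 := fun e => by
          have := v.injective e
          rw [this] at hlt
          exact lt_irrefl _ hlt
        have hlt' : v p.1 < v p.2 := lt_of_le_of_ne (not_lt.mp hc) hne
        exact ⟨Finset.mem_univ _, hlt', hv⟩
    · intro p hp q hq he
      simp only at he
      by_cases hcp : v p.2 < v p.1 <;> by_cases hcq : v q.2 < v q.1
      · rw [if_pos hcp, if_pos hcq] at he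
        exact Sum.inl.inj he
      · rw [if_pos hcp, if_neg hcq] at he
        exact absurd he (by simp)
      · rw [if_neg hcp, if_pos hcq] at he
        exact absurd he (by simp)
      · rw [if_neg hcp, if_neg hcq] at he
        have he' := Sum.inr.inj he
        have e1 : v p.1 = v q.1 := congrArg Prod.fst he'
        have e2 : v p.2 = v q.2 := congrArg Prod.snd he'
        exact Prod.ext (v.injective e1) (v.injective e2)
  rw [Finset.card_disjSum] at hcard
  show A.card ≤ Bu.card + Bv.card
  omega

lemma eq_one_of_no_descent {w : Equiv.Perm (Fin n)}
    (hnd : ∀ (i : ℕ) (hi : i + 1 < n), (w ⟨i, by omega⟩ : ℕ) < (w ⟨i + 1, hi⟩ : ℕ)) :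
    w = 1 := by
  have hmono : ∀ (d : ℕ) (i j : Fin n), (j : ℕ) = (i : ℕ) + d + 1 → (w i : ℕ) < w j := by
    intro d
    induction d with
    | zero =>
      intro i j hj
      have hi : (i : ℕ) + 1 < n := by have := j.isLt; omega
      have h0 := hnd (i : ℕ) hi
      rw [Fin.eta] at h0
      rw [show j = ⟨(i : ℕ) + 1, hi⟩ from Fin.ext (by show (j : ℕ) = (i : ℕ) + 1; omega)]
      exact h0
    | succ d ih =>
      intro i j hj
      have hmid : (i : ℕ) + d + 1 < n := by have := j.isLt; omega
      have h1 := ih i ⟨(i : ℕ) + d + 1, hmid⟩ rfl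
      have h2 : (w ⟨(i : ℕ) + d + 1, hmid⟩ : ℕ) < w j := by
        have hplus : (i : ℕ) + d + 1 + 1 < n := by have := j.isLt; omega
        have h0 := hnd ((i : ℕ) + d + 1) hplus
        rw [show j = ⟨(i : ℕ) + d + 1 + 1, hplus⟩ from Fin.ext
          (by show (j : ℕ) = (i : ℕ) + d + 1 + 1; omega)]
        exact h0
      omega
  have hmono' : ∀ i j : Fin n, i < j → w i < w j := by
    intro i j hij
    rw [Fin.lt_def] at hij ⊢
    exact hmono ((j : ℕ) - (i : ℕ) - 1) i j (by omega)
  have hinvmono : ∀ i j : Fin n, i < j → w⁻¹ i < w⁻¹ j := by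
    intro i j hij
    rcases lt_trichotomy (w⁻¹ i) (w⁻¹ j) with hlt | heq | hgt
    · exact hlt
    · exact absurd (by rw [← show w (w⁻¹ i) = i from w.apply_symm_apply i, ← show w (w⁻¹ j) = j from w.apply_symm_apply j, heq])
        (ne_of_lt hij)
    · have := hmono' _ _ hgt
      rw [show ∀ y, w (w⁻¹ y) = y from w.apply_symm_apply, show ∀ y, w (w⁻¹ y) = y from w.apply_symm_apply] at this
      exact absurd hij (not_lt.mpr (le_of_lt this))
  have hlegen : ∀ (f : Equiv.Perm (Fin n)), (∀ i j : Fin n, i < j → f i < f j) →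
      ∀ (k : ℕ) (hk : k < n), k ≤ (f ⟨k, hk⟩ : ℕ) := by
    intro f hf k
    induction k with
    | zero => intro _; omega
    | succ k ih =>
      intro hk
      have hkn : k < n := by omega
      have h1 := ih hkn
      have h2 : f ⟨k, hkn⟩ < f ⟨k + 1, hk⟩ :=
        hf _ _ (by rw [Fin.lt_def]; show k < k + 1; omega)
      rw [Fin.lt_def] at h2
      omega
  apply Equiv.ext
  intro x
  have h1 := hlegen w hmono' (x : ℕ) x.isLt
  rw [Fin.eta] at h1
  have h2 := hlegen w⁻¹ hinvmono ((w x : Fin n) : ℕ) (w x).isLt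
  rw [Fin.eta, show ∀ y, w⁻¹ (w y) = y from w.symm_apply_apply] at h2
  have : w x = x := Fin.ext (by omega)
  rw [this]
  rfl

lemma decomp_take_drop {α : Type*} (L : List α) (i : ℕ) (hi : i + 1 < L.length) :
    L = L.take i ++ L[i]'(by omega) :: L[i + 1]'hi :: L.drop (i + 2) := by
  conv_lhs => rw [← List.take_append_drop i L]
  congr 1
  rw [List.drop_eq_getElem_cons (by omega : i < L.length)]
  congr 1
  exact List.drop_eq_getElem_cons hi

lemma row1_mono {w : Equiv.Perm (Fin n)} {i : ℕ} (h : i + 1 < n)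
    (hw : FullyCommutative w)
    (hdesc : (w ⟨i + 1, h⟩ : ℕ) < w ⟨i, by omega⟩) :
    Row1 (RSKP w) ⊆ Row1 (RSKP (w * simpleTr i h)) := by
  have hlenL : (oneLine w).length = n := oneLine_length w
  have hiL : i + 1 < (oneLine w).length := by omega
  have hLd : oneLine w = (oneLine w).take i ++
      (w ⟨i, by omega⟩ : ℕ) :: (w ⟨i + 1, h⟩ : ℕ) :: (oneLine w).drop (i + 2) := by
    have hd := decomp_take_drop (oneLine w) i hiL
    rw [show (oneLine w)[i]'(by omega) = (w ⟨i, by omega⟩ : ℕ) from oneLine_getElem w i (by omega),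
      show (oneLine w)[i + 1]'hiL = (w ⟨i + 1, h⟩ : ℕ) from oneLine_getElem w (i + 1) h] at hd
    exact hd
  have hUd : oneLine (w * simpleTr i h) = (oneLine w).take i ++
      (w ⟨i + 1, h⟩ : ℕ) :: (w ⟨i, by omega⟩ : ℕ) :: (oneLine w).drop (i + 2) := by
    have hlenU : (oneLine (w * simpleTr i h)).length = n := oneLine_length _
    have hiU : i + 1 < (oneLine (w * simpleTr i h)).length := by omega
    have hd := decomp_take_drop (oneLine (w * simpleTr i h)) i hiU
    rw [hd]
    have hval : ∀ (j : ℕ) (hj : j < n), ((w * simpleTr i h) ⟨j, hj⟩ : ℕ)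
        = (w (simpleTr i h ⟨j, hj⟩) : ℕ) := fun _ _ => rfl
    congr 1
    · -- takes are equal
      apply List.ext_getElem
      · simp [oneLine]
      · intro j h1 h2
        rw [List.getElem_take, List.getElem_take]
        have hj : j < i := by
          simp only [List.length_take] at h1
          omega
        have hjn : j < n := by omega
        rw [show ∀ (hh : j < (oneLine (w * simpleTr i h)).length),
            (oneLine (w * simpleTr i h))[j]'hh = ((w * simpleTr i h) ⟨j, hjn⟩ : ℕ) from
            fun hh => oneLine_getElem _ j hjn,
          show ∀ (hh : j < (oneLine w).length), (oneLine w)[j]'hh = (w ⟨j, hjn⟩ : ℕ) from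
            fun hh => oneLine_getElem _ j hjn]
        rw [hval]
        congr 2
        apply Equiv.swap_apply_of_ne_of_ne
        · intro e
          have := congrArg Fin.val e
          simp at this
          omega
        · intro e
          have := congrArg Fin.val e
          simp at this
          omega
    · congr 1
      · -- entry at i
        rw [show (oneLine (w * simpleTr i h))[i]'(by omega)
            = ((w * simpleTr i h) ⟨i, by omega⟩ : ℕ) from oneLine_getElem _ i (by omega)]
        rw [hval]
        congr 2
        exact Equiv.swap_apply_left _ _
      · congr 1
        · -- entry at i+1
          rw [show (oneLine (w * simpleTr i h))[i + 1]'hiU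
              = ((w * simpleTr i h) ⟨i + 1, h⟩ : ℕ) from oneLine_getElem _ (i + 1) h]
          rw [hval]
          congr 2
          exact Equiv.swap_apply_right _ _
        · -- drops are equal
          apply List.ext_getElem
          · simp [oneLine]
          · intro j h1 h2
            rw [List.getElem_drop, List.getElem_drop]
            have hjn : i + 2 + j < n := by
              simp only [List.length_drop] at h1
              omega
            rw [show ∀ (hh : i + 2 + j < (oneLine (w * simpleTr i h)).length),
                (oneLine (w * simpleTr i h))[i + 2 + j]'hh
                  = ((w * simpleTr i h) ⟨i + 2 + j, hjn⟩ : ℕ) from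
                fun hh => oneLine_getElem _ _ hjn,
              show ∀ (hh : i + 2 + j < (oneLine w).length),
                (oneLine w)[i + 2 + j]'hh = (w ⟨i + 2 + j, hjn⟩ : ℕ) from
                fun hh => oneLine_getElem _ _ hjn]
            rw [hval]
            congr 2
            apply Equiv.swap_apply_of_ne_of_ne
            · intro e
              have := congrArg Fin.val e
              simp at this
              omega
            · intro e
              have := congrArg Fin.val e
              simp at this
              omega
  show Row1 (RSKList (oneLine w)) ⊆ Row1 (RSKList (oneLine (w * simpleTr i h)))
  unfold Row1
  rw [RSKList_getD0, RSKList_getD0]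
  conv_lhs => rw [hLd]
  rw [hUd]
  exact core hdesc (by rw [← hLd]; exact oneLine_nodup w) (by rw [← hLd]; exact av321_of_fc hw)

lemma row1_chain : ∀ k : ℕ, ∀ (w wc w' : Equiv.Perm (Fin n)), invCount w' = k →
    FullyCommutative w → w = wc * w' → invCount w = invCount wc + invCount w' →
    Row1 (RSKP w) ⊆ Row1 (RSKP wc) := by
  intro k
  induction k using Nat.strong_induction_on with
  | _ k ih =>
    intro w wc w' hk hw hfac hadd
    by_cases hw1 : w' = 1
    · rw [hw1, mul_one] at hfac
      rw [hfac]
    · -- find a descent of w'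
      have hdesc' : ∃ (i : ℕ) (hi : i + 1 < n), (w' ⟨i + 1, hi⟩ : ℕ) < w' ⟨i, by omega⟩ := by
      -- by contradiction : no descent means identity
        by_contra hcon
        push_neg at hcon
        apply hw1
        apply eq_one_of_no_descent
        intro i hi
        have h1 := hcon i hi
        have hne : (w' ⟨i, by omega⟩ : ℕ) ≠ (w' ⟨i + 1, hi⟩ : ℕ) := by
          intro e
          have := w'.injective (Fin.val_injective e)
          have := congrArg Fin.val this
          simp at this
        omega
      obtain ⟨i, hi, hdesc'⟩ := hdesc'
      have hw''c : invCount (w' * simpleTr i hi) + 1 = invCount w' :=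
        invCount_swap_desc hi hdesc'
      have hu : w * simpleTr i hi = wc * (w' * simpleTr i hi) := by
        rw [hfac, mul_assoc]
      have hsub : invCount (w * simpleTr i hi) ≤ invCount wc + invCount (w' * simpleTr i hi) := by
        rw [hu]
        exact invCount_mul_le _ _
      have hwne : (w ⟨i, by omega⟩ : ℕ) ≠ (w ⟨i + 1, hi⟩ : ℕ) := by
        intro e
        have := w.injective (Fin.val_injective e)
        have := congrArg Fin.val this
        simp at this
      by_cases hcase : (w ⟨i, by omega⟩ : ℕ) < w ⟨i + 1, hi⟩
      · exfalso
        have := invCount_swap_asc hi hcase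
        omega
      · have hwdesc : (w ⟨i + 1, hi⟩ : ℕ) < w ⟨i, by omega⟩ := by omega
        have hucount : invCount (w * simpleTr i hi) + 1 = invCount w :=
          invCount_swap_desc hi hwdesc
        have hadd' : invCount (w * simpleTr i hi)
            = invCount wc + invCount (w' * simpleTr i hi) := by omega
        have hufc : FullyCommutative (w * simpleTr i hi) := fc_of_swap hi hw hwdesc
        have step1 : Row1 (RSKP w) ⊆ Row1 (RSKP (w * simpleTr i hi)) :=
          row1_mono hi hw hwdesc
        exact step1.trans (ih (invCount (w' * simpleTr i hi)) (by omega)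
          (w * simpleTr i hi) wc (w' * simpleTr i hi) rfl hufc hu hadd')

end PermLevel

end BCT

/-- **Corollary.** If `ŵ` is the boolean core of the fully commutative
permutation `w`, then `Row₁(P(ŵ)) ⊇ Row₁(P(w))` and `Row₂(P(ŵ)) ⊆ Row₂(P(w))`. -/
theorem boolean_core_tableaux {n : ℕ} (w wc : Equiv.Perm (Fin n))
    (hw : FullyCommutative w) (hbool : BooleanPerm wc) (hsupp : Supp wc = Supp w)
    (hfact : ∃ w' : Equiv.Perm (Fin n),
      w = wc * w' ∧ invCount w = invCount wc + invCount w') :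
    Row1 (RSKP w) ⊆ Row1 (RSKP wc) ∧ Row2 (RSKP wc) ⊆ Row2 (RSKP w) := by
  obtain ⟨w', hfac, hadd⟩ := hfact
  have h1 : Row1 (RSKP w) ⊆ Row1 (RSKP wc) :=
    BCT.row1_chain (invCount w') w wc w' rfl hw hfac hadd
  refine ⟨h1, ?_⟩
  have hwcfc : FullyCommutative wc := hbool.1
  have hIc := BCT.inv_full (BCT.oneLine_nodup wc) (BCT.av321_of_fc hwcfc)
  have hIw := BCT.inv_full (BCT.oneLine_nodup w) (BCT.av321_of_fc hw)
  have hr2c : Row2 (RSKP wc) = (BCT.bseq (oneLine wc)).toFinset := by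
    show ((RSKList (oneLine wc)).getD 1 []).toFinset = _
    rw [BCT.RSKList_getD1, BCT.fstRow_of_sorted hIc.bsorted]
  have hr2w : Row2 (RSKP w) = (BCT.bseq (oneLine w)).toFinset := by
    show ((RSKList (oneLine w)).getD 1 []).toFinset = _
    rw [BCT.RSKList_getD1, BCT.fstRow_of_sorted hIw.bsorted]
  intro z hz
  rw [hr2c, List.mem_toFinset] at hz
  rw [hr2w, List.mem_toFinset]
  have hzLc : z ∈ oneLine wc := hIc.mem_bs hz
  have hzn : z < n := (BCT.mem_oneLine wc z).mp hzLc
  have hzLw : z ∈ oneLine w := (BCT.mem_oneLine w z).mpr hzn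
  have hz1c : z ∉ BCT.fstRow (oneLine wc) := fun hmem =>
    hIc.disj (BCT.oneLine_nodup wc) hmem hz
  have hz1w : z ∉ BCT.fstRow (oneLine w) := by
    intro hmem
    apply hz1c
    have hmem1 : z ∈ Row1 (RSKP w) := by
      show z ∈ ((RSKList (oneLine w)).getD 0 []).toFinset
      rw [BCT.RSKList_getD0]
      exact List.mem_toFinset.mpr hmem
    have h' : z ∈ ((RSKList (oneLine wc)).getD 0 []).toFinset := h1 hmem1
    rw [BCT.RSKList_getD0] at h'
    exact List.mem_toFinset.mp h'
  have hzmul : z ∈ ((oneLine w : List ℕ) : Multiset ℕ) := by simpa using hzLw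
  rw [← hIw.content, Multiset.mem_add] at hzmul
  rcases hzmul with hcase | hcase
  · exact absurd (by simpa using hcase) hz1w
  · simpa using hcase
end

section
/- Let w ∈ S_n be a fully commutative permutation with Row₂(P(w)) = {z₁ < z₂ < ⋯ < z_t}, and for each i let b_i be the value that bumps z_i from the first row to the second row during the RSK insertion of w. Then: (a) z₁ z₂ ⋯ z_t is an increasing subsequence of the one-line notation of w (the values z₁, …, z_t occur from left to right); (b) the sets {z₁,…,z_t} and {b₁,…,b_t} are disjoint; (c) b₁ b₂ ⋯ b_t is an increasing subsequence of w (so b₁ < b₂ < ⋯ < b_t and they occur from left to right); (d) for 1 ≤ i < j ≤ t, the value z_i is bumped before z_j during the insertion. -/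
namespace RowTwoAux

/-- minimality of find? in a sorted list -/
lemma find?_min {x z : ℕ} : ∀ {r : List ℕ}, r.Pairwise (· < ·) →
    r.find? (fun y => decide (x < y)) = some z → ∀ c ∈ r, x < c → z ≤ c := by
  intro r
  induction r with
  | nil => intro _ h; simp at h
  | cons a tl ih =>
    intro hs hf c hc hxc
    rcases List.pairwise_cons.mp hs with ⟨ha, hs'⟩
    by_cases hxa : x < a
    · rw [List.find?_cons_of_pos (by simpa using hxa)] at hf
      obtain rfl : a = z := by injection hf
      rcases List.mem_cons.mp hc with rfl | h
      exacts [le_rfl, (ha c h).le]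
    · rw [List.find?_cons_of_neg (by simpa using hxa)] at hf
      rcases List.mem_cons.mp hc with rfl | h
      · exact absurd hxc hxa
      · exact ih hs' hf c h hxc

lemma mem_replace {r : List ℕ} {z x v : ℕ} (hz : z ∈ r) :
    v ∈ r.map (fun w => if w = z then x else w) ↔ (v ∈ r ∧ v ≠ z) ∨ v = x := by
  simp only [List.mem_map]
  constructor
  · rintro ⟨w, hw, hfw⟩
    by_cases h : w = z
    · subst h; simp at hfw; right; omega
    · simp [h] at hfw; subst hfw; exact Or.inl ⟨hw, h⟩
  · rintro (⟨hv, hvz⟩ | rfl)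
    · exact ⟨v, hv, by simp [hvz]⟩
    · exact ⟨z, hz, by simp⟩

lemma sorted_replace {x z : ℕ} : ∀ {r : List ℕ}, r.Pairwise (· < ·) →
    r.find? (fun y => decide (x < y)) = some z → (∀ w ∈ r, w ≠ x) →
    (r.map (fun w => if w = z then x else w)).Pairwise (· < ·) := by
  intro r
  induction r with
  | nil => intro _ h; simp at h
  | cons a tl ih =>
    intro hs hf hx
    rcases List.pairwise_cons.mp hs with ⟨ha, hs'⟩
    by_cases hxa : x < a
    · rw [List.find?_cons_of_pos (by simpa using hxa)] at hf
      obtain rfl : a = z := by injection hf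
      have htl : tl.map (fun w => if w = a then x else w) = tl := by
        rw [List.map_congr_left (g := id) (fun w hw => by rw [if_neg (ha w hw).ne']; rfl),
          List.map_id]
      simp only [List.map_cons, if_pos rfl, htl]
      exact List.pairwise_cons.mpr ⟨fun b hb => lt_trans hxa (ha b hb), hs'⟩
    · rw [List.find?_cons_of_neg (by simpa using hxa)] at hf
      have hz : z ∈ tl := List.mem_of_find?_eq_some hf
      have haz : a ≠ z := (ha z hz).ne
      simp only [List.map_cons, if_neg haz]
      refine List.pairwise_cons.mpr ⟨?_, ih hs' hf (fun w hw => hx w (List.mem_cons_of_mem _ hw))⟩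
      intro b hb
      rcases (@mem_replace tl z x b hz).mp hb with ⟨hbtl, _⟩ | rfl
      · exact ha b hbtl
      · have h1 : a ≠ b := hx a (List.mem_cons_self (a := a) (l := tl))
        have h2 : ¬ b < a := by simpa using hxa
        omega

lemma RSKList_take_succ (l : List ℕ) (k : ℕ) (hk : k < l.length) :
    RSKList (l.take (k+1)) = rowInsert (RSKList (l.take k)) (l.getD k 0) := by
  have h1 : l.take (k+1) = l.take k ++ [l.getD k 0] := by
    rw [List.take_succ]
    congr 1
    rw [List.getElem?_eq_getElem hk, List.getD_eq_getElem l 0 hk]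
    rfl
  rw [RSKList, h1, List.foldl_append]
  rfl

def row1 (l : List ℕ) (k : ℕ) : List ℕ := (RSKList (l.take k)).getD 0 []
def row2 (l : List ℕ) (k : ℕ) : List ℕ := (RSKList (l.take k)).getD 1 []

def Ins (l : List ℕ) (k v : ℕ) : Prop := ∃ p, p < k ∧ p < l.length ∧ l.getD p 0 = v
def Bmp (l : List ℕ) (k v : ℕ) : Prop := ∃ m, m < k ∧ BumpsAt l m v

def No321 (l : List ℕ) : Prop := ∀ p q r, p < q → q < r → r < l.length →
  ¬ (l.getD r 0 < l.getD q 0 ∧ l.getD q 0 < l.getD p 0)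

structure Inv (l : List ℕ) (k : ℕ) : Prop where
  len : (RSKList (l.take k)).length ≤ 2
  s1 : (row1 l k).Pairwise (· < ·)
  s2 : (row2 l k).Pairwise (· < ·)
  mem1 : ∀ v, v ∈ row1 l k ↔ Ins l k v ∧ ¬ Bmp l k v
  mem2 : ∀ v, v ∈ row2 l k ↔ Bmp l k v
  time : ∀ z z' m m', BumpsAt l m z → BumpsAt l m' z' → m < k → m' < k → (z < z' ↔ m < m')

lemma bumpsAt_iff {l : List ℕ} {k z : ℕ} : BumpsAt l k z ↔ k < l.length ∧
    (row1 l k).find? (fun y => decide (l.getD k 0 < y)) = some z := Iff.rfl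

lemma bumpsAt_mem_row1 {l : List ℕ} {k z : ℕ} (h : BumpsAt l k z) : z ∈ row1 l k :=
  List.mem_of_find?_eq_some h.2

lemma bumpsAt_lt {l : List ℕ} {k z : ℕ} (h : BumpsAt l k z) : l.getD k 0 < z := by
  have := List.find?_some h.2
  simpa using this

lemma getD_inj {l : List ℕ} (hnd : l.Nodup) {p q : ℕ} (hp : p < l.length)
    (hq : q < l.length) (h : l.getD p 0 = l.getD q 0) : p = q := by
  rw [List.getD_eq_getElem l 0 hp, List.getD_eq_getElem l 0 hq] at h
  exact (hnd.getElem_inj_iff).mp h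

lemma bmp_ins {l : List ℕ} {k v : ℕ} (hall : ∀ m ≤ k, Inv l m) (h : Bmp l k v) :
    Ins l k v := by
  obtain ⟨m, hm, hbm⟩ := h
  obtain ⟨⟨p, hpm, hpl, hpv⟩, -⟩ := ((hall m hm.le).mem1 v).mp (bumpsAt_mem_row1 hbm)
  exact ⟨p, by omega, hpl, hpv⟩

lemma keyclaim {l : List ℕ} (hnd : l.Nodup) (h3 : No321 l) {k z z' : ℕ}
    (hall : ∀ m ≤ k, Inv l m) (hb : BumpsAt l k z) (hz' : z' ∈ row2 l k) : z' < z := by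
  have hIk := hall k le_rfl
  have hk := hb.1
  obtain ⟨⟨p, hpk, hpl, hpz⟩, hnb⟩ := (hIk.mem1 z).mp (bumpsAt_mem_row1 hb)
  obtain ⟨m, hmk, hbm⟩ := (hIk.mem2 z').mp hz'
  have hIm := hall m hmk.le
  have hml : m < l.length := hbm.1
  have hb'z' : l.getD m 0 < z' := bumpsAt_lt hbm
  obtain ⟨⟨q, hqm, hql, hqz⟩, -⟩ := (hIm.mem1 z').mp (bumpsAt_mem_row1 hbm)
  have hx : l.getD k 0 < z := bumpsAt_lt hb
  by_contra hcon
  have hzz' : z ≠ z' := by rintro rfl; exact hnb ⟨m, hmk, hbm⟩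
  have hzlt : z < z' := by omega
  have hpq : p ≠ q := fun h => hzz' (by rw [← hpz, ← hqz, h])
  rcases lt_or_gt_of_ne hpq with hlt | hgt
  · -- p < q < m : use pattern (q, m, k)
    have hzr1m : z ∈ row1 l m := (hIm.mem1 z).mpr
      ⟨⟨p, by omega, hpl, hpz⟩, fun ⟨m', hm', hb'⟩ => hnb ⟨m', by omega, hb'⟩⟩
    have hminz : ¬ l.getD m 0 < z := by
      intro hlt2
      have := find?_min hIm.s1 hbm.2 z hzr1m hlt2
      omega
    have hne : z ≠ l.getD m 0 := by
      intro h
      have : p = m := getD_inj hnd hpl hml (by rw [hpz, ← h])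
      omega
    refine h3 q m k hqm hmk hk ⟨by omega, ?_⟩
    rw [hqz]; exact hb'z'
  · -- q < p : pattern (q, p, k)
    refine h3 q p k hgt hpk hk ⟨?_, ?_⟩
    · rw [hpz]; exact hx
    · rw [hpz, hqz]; exact hzlt

lemma inv_zero (l : List ℕ) : Inv l 0 := by
  have hT : RSKList (l.take 0) = [] := rfl
  refine ⟨by rw [hT]; simp, ?_, ?_, ?_, ?_, ?_⟩
  · rw [row1, hT]; exact List.Pairwise.nil
  · rw [row2, hT]; exact List.Pairwise.nil
  · intro v
    rw [row1, hT]
    simp only [List.getD]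
    constructor
    · intro h; simp at h
    · rintro ⟨⟨p, hp, -, -⟩, -⟩; omega
  · intro v
    rw [row2, hT]
    simp only [List.getD]
    constructor
    · intro h; simp at h
    · rintro ⟨m, hm, -⟩; omega
  · intro _ _ _ _ _ _ h; omega

lemma inv_succ {l : List ℕ} (hnd : l.Nodup) (h3 : No321 l) {k : ℕ}
    (hall : ∀ m ≤ k, Inv l m) (hk : k < l.length) : Inv l (k+1) := by
  have hIk := hall k le_rfl
  have hstep := RSKList_take_succ l k hk
  have hxins : ¬ Ins l k (l.getD k 0) := by
    rintro ⟨p, hpk, hpl, hpx⟩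
    have : p = k := getD_inj hnd hpl hk hpx
    omega
  have hins_succ : ∀ v, Ins l (k+1) v ↔ Ins l k v ∨ v = l.getD k 0 := by
    intro v
    constructor
    · rintro ⟨p, hpk, hpl, hpv⟩
      rcases Nat.lt_succ_iff_lt_or_eq.mp hpk with h | rfl
      · exact Or.inl ⟨p, h, hpl, hpv⟩
      · exact Or.inr hpv.symm
    · rintro (⟨p, hpk, hpl, hpv⟩ | rfl)
      · exact ⟨p, by omega, hpl, hpv⟩
      · exact ⟨k, by omega, hk, rfl⟩
  have hxnb : ¬ Bmp l k (l.getD k 0) := fun h => hxins (bmp_ins hall h)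
  have hxr1 : l.getD k 0 ∉ row1 l k := fun h => hxins ((hIk.mem1 _).mp h).1
  rcases hfind : (row1 l k).find? (fun y => decide (l.getD k 0 < y)) with _ | z
  case none =>
    have hnobump : ∀ v, ¬ BumpsAt l k v := by
      intro v hv
      have h2 := hv.2
      rw [bumpsAt_iff] at hv
      rw [hv.2] at hfind
      cases hfind
    obtain ⟨hr1, hr2, hlen2⟩ : row1 l (k+1) = row1 l k ++ [l.getD k 0] ∧
        row2 l (k+1) = row2 l k ∧ (RSKList (l.take (k+1))).length ≤ 2 := by
      rcases hT : RSKList (l.take k) with _ | ⟨r1, rest⟩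
      · have h0 : row1 l k = [] := by rw [row1, hT]; rfl
        have h1 : RSKList (l.take (k+1)) = [[l.getD k 0]] := by
          rw [hstep, hT]; rfl
        refine ⟨?_, ?_, ?_⟩
        · rw [row1, h1, h0]; rfl
        · rw [row2, h1, row2, hT]; rfl
        · rw [h1]; simp
      · have h0 : row1 l k = r1 := by rw [row1, hT]; rfl
        have hfind' : r1.find? (fun y => decide (l.getD k 0 < y)) = none := by
          rw [← h0]; exact hfind
        have h1 : RSKList (l.take (k+1)) = (r1 ++ [l.getD k 0]) :: rest := by
          rw [hstep, hT]
          show rowInsert (r1 :: rest) (l.getD k 0) = _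
          rw [rowInsert, hfind']
        refine ⟨?_, ?_, ?_⟩
        · rw [row1, h1, h0]; rfl
        · rw [row2, h1, row2, hT]; rfl
        · rw [h1]
          have := hIk.len
          rw [hT] at this
          simpa using this
    have hbmp_succ : ∀ v, Bmp l (k+1) v ↔ Bmp l k v := by
      intro v
      constructor
      · rintro ⟨m, hm, hbv⟩
        rcases Nat.lt_succ_iff_lt_or_eq.mp hm with h | rfl
        · exact ⟨m, h, hbv⟩
        · exact absurd hbv (hnobump v)
      · rintro ⟨m, hm, hbv⟩; exact ⟨m, by omega, hbv⟩
    refine ⟨hlen2, ?_, ?_, ?_, ?_, ?_⟩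
    · rw [hr1]
      refine List.pairwise_append.mpr ⟨hIk.s1, List.pairwise_singleton _ _, ?_⟩
      intro a ha b hb
      rw [List.mem_singleton] at hb
      subst hb
      have h1 : ¬ l.getD k 0 < a := by
        have := List.find?_eq_none.mp hfind a ha
        simpa using this
      have h2 : a ≠ l.getD k 0 := fun h => hxr1 (h ▸ ha)
      omega
    · rw [hr2]; exact hIk.s2
    · intro v
      rw [hr1, List.mem_append, List.mem_singleton, hins_succ, hbmp_succ]
      constructor
      · rintro (hv | rfl)
        · obtain ⟨hi, hnb⟩ := (hIk.mem1 v).mp hv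
          exact ⟨Or.inl hi, hnb⟩
        · exact ⟨Or.inr rfl, hxnb⟩
      · rintro ⟨hi | rfl, hnb⟩
        · exact Or.inl ((hIk.mem1 v).mpr ⟨hi, hnb⟩)
        · exact Or.inr rfl
    · intro v
      rw [hr2, hbmp_succ]
      exact hIk.mem2 v
    · intro z0 z0' m m' hb0 hb0' hm hm'
      have hmk : m < k := by
        rcases Nat.lt_succ_iff_lt_or_eq.mp hm with h | rfl
        · exact h
        · exact absurd hb0 (hnobump z0)
      have hmk' : m' < k := by
        rcases Nat.lt_succ_iff_lt_or_eq.mp hm' with h | rfl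
        · exact h
        · exact absurd hb0' (hnobump z0')
      exact hIk.time z0 z0' m m' hb0 hb0' hmk hmk'
  case some =>
    have hbz : BumpsAt l k z := bumpsAt_iff.mpr ⟨hk, hfind⟩
    have hz1 : z ∈ row1 l k := bumpsAt_mem_row1 hbz
    have hxz : l.getD k 0 < z := bumpsAt_lt hbz
    have hbonly : ∀ v, BumpsAt l k v → v = z := by
      intro v hv
      have h2 := (bumpsAt_iff.mp hv).2
      rw [hfind] at h2
      injection h2 with h2
      exact h2.symm
    have hkey : ∀ y ∈ row2 l k, y < z := fun y hy => keyclaim hnd h3 hall hbz hy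
    obtain ⟨hr1, hr2, hlen2⟩ : row1 l (k+1) =
          (row1 l k).map (fun w => if w = z then l.getD k 0 else w) ∧
        row2 l (k+1) = row2 l k ++ [z] ∧ (RSKList (l.take (k+1))).length ≤ 2 := by
      rcases hT : RSKList (l.take k) with _ | ⟨r1, rest⟩
      · exfalso
        have h0 : row1 l k = [] := by rw [row1, hT]; rfl
        rw [h0] at hfind
        cases hfind
      · have h0 : row1 l k = r1 := by rw [row1, hT]; rfl
        have hfind' : r1.find? (fun y => decide (l.getD k 0 < y)) = some z := by
          rw [← h0]; exact hfind
        rcases rest with _ | ⟨r2, rest2⟩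
        · have h1 : RSKList (l.take (k+1)) =
              [r1.map (fun w => if w = z then l.getD k 0 else w), [z]] := by
            rw [hstep, hT]
            show rowInsert [r1] (l.getD k 0) = _
            rw [rowInsert, hfind']
            rfl
          refine ⟨?_, ?_, ?_⟩
          · rw [row1, h1, h0]; rfl
          · rw [row2, h1, row2, hT]; rfl
          · rw [h1]; simp
        · rcases rest2 with _ | ⟨r3, rest3⟩
          · have h2r : row2 l k = r2 := by rw [row2, hT]; rfl
            have hfind2 : r2.find? (fun y => decide (z < y)) = none := by
              rw [List.find?_eq_none]
              intro y hy
              have : y < z := hkey y (h2r ▸ hy)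
              simp; omega
            have h1 : RSKList (l.take (k+1)) =
                [r1.map (fun w => if w = z then l.getD k 0 else w), r2 ++ [z]] := by
              rw [hstep, hT]
              show rowInsert [r1, r2] (l.getD k 0) = _
              rw [rowInsert, hfind']
              show _ :: rowInsert [r2] z = _
              rw [rowInsert, hfind2]
            refine ⟨?_, ?_, ?_⟩
            · rw [row1, h1, h0]; rfl
            · rw [row2, h1, h2r]; rfl
            · rw [h1]; simp
          · exfalso
            have := hIk.len
            rw [hT] at this
            simp at this
    have hbmp_succ : ∀ v, Bmp l (k+1) v ↔ Bmp l k v ∨ v = z := by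
      intro v
      constructor
      · rintro ⟨m, hm, hbv⟩
        rcases Nat.lt_succ_iff_lt_or_eq.mp hm with h | rfl
        · exact Or.inl ⟨m, h, hbv⟩
        · exact Or.inr (hbonly v hbv)
      · rintro (⟨m, hm, hbv⟩ | rfl)
        · exact ⟨m, by omega, hbv⟩
        · exact ⟨k, by omega, hbz⟩
    have hxnez : l.getD k 0 ≠ z := hxz.ne
    refine ⟨hlen2, ?_, ?_, ?_, ?_, ?_⟩
    · rw [hr1]
      exact sorted_replace hIk.s1 hfind (fun w hw h => hxr1 (h ▸ hw))
    · rw [hr2]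
      refine List.pairwise_append.mpr ⟨hIk.s2, List.pairwise_singleton _ _, ?_⟩
      intro a ha b hb
      rw [List.mem_singleton] at hb
      subst hb
      exact hkey a ha
    · intro v
      rw [hr1, mem_replace hz1, hins_succ]
      constructor
      · rintro (⟨hv, hvz⟩ | rfl)
        · obtain ⟨hi, hnb⟩ := (hIk.mem1 v).mp hv
          refine ⟨Or.inl hi, ?_⟩
          rw [hbmp_succ]
          rintro (h | rfl)
          · exact hnb h
          · exact hvz rfl
        · refine ⟨Or.inr rfl, ?_⟩
          rw [hbmp_succ]
          rintro (h | h)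
          · exact hxnb h
          · exact hxnez h
      · rintro ⟨hi | rfl, hnb⟩
        · rw [hbmp_succ] at hnb
          push_neg at hnb
          exact Or.inl ⟨(hIk.mem1 v).mpr ⟨hi, hnb.1⟩, hnb.2⟩
        · exact Or.inr rfl
    · intro v
      rw [hr2, List.mem_append, List.mem_singleton, hbmp_succ, hIk.mem2 v]
    · intro z0 z0' m m' hb0 hb0' hm hm'
      rcases Nat.lt_succ_iff_lt_or_eq.mp hm with hmk | rfl
      · rcases Nat.lt_succ_iff_lt_or_eq.mp hm' with hmk' | rfl
        · exact hIk.time z0 z0' m m' hb0 hb0' hmk hmk'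
        · have he : z0' = z := hbonly z0' hb0'
          have hz0 : z0 < z := hkey z0 ((hIk.mem2 z0).mpr ⟨m, hmk, hb0⟩)
          exact iff_of_true (by omega) hmk
      · rcases Nat.lt_succ_iff_lt_or_eq.mp hm' with hmk' | rfl
        · have he : z0 = z := hbonly z0 hb0
          have hz0 : z0' < z := hkey z0' ((hIk.mem2 z0').mpr ⟨m', hmk', hb0'⟩)
          exact iff_of_false (by omega) (by omega)
        · have h1 : z0 = z := hbonly z0 hb0
          have h2 : z0' = z := hbonly z0' hb0'
          exact iff_of_false (by omega) (by omega)

lemma inv_all {l : List ℕ} (hnd : l.Nodup) (h3 : No321 l) :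
    ∀ k, k ≤ l.length → ∀ m ≤ k, Inv l m := by
  intro k
  induction k with
  | zero =>
    intro _ m hm
    obtain rfl : m = 0 := Nat.le_zero.mp hm
    exact inv_zero l
  | succ k ih =>
    intro hk m hm
    rcases Nat.lt_succ_iff_lt_or_eq.mp (Nat.lt_succ_of_le hm) with h | rfl
    · exact ih (by omega) m (by omega)
    · exact inv_succ hnd h3 (fun m' hm' => ih (by omega) m' hm') (by omega)


lemma sublist_of_pos {l : List ℕ} {t : ℕ} {f P : Fin t → ℕ}
    (hmono : StrictMono P) (hlt : ∀ i, P i < l.length) (hval : ∀ i, l.getD (P i) 0 = f i) :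
    (List.ofFn f).Sublist l := by
  have h1 := List.map_getElem_sublist (l := l)
    (is := List.ofFn (fun i : Fin t => (⟨P i, hlt i⟩ : Fin l.length)))
    (List.pairwise_ofFn.mpr (fun i j hij => hmono hij))
  rw [List.map_ofFn] at h1
  have hfe : ((fun i : Fin l.length => l[i]) ∘ fun i : Fin t => (⟨P i, hlt i⟩ : Fin l.length)) = f := by
    funext i
    have := hval i
    rw [List.getD_eq_getElem l 0 (hlt i)] at this
    exact this
  rwa [hfe] at h1

end RowTwoAux

/-- **Lemma.** Let `w` be fully commutative with `Row₂(P(w)) = {z₁ < ⋯ < z_t}`,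
where `bᵢ` bumps `zᵢ` to the second row. Then: (a) `z₁⋯z_t` is an (increasing)
subsequence of `w`; (b) `{z₁,…,z_t}` and `{b₁,…,b_t}` are disjoint;
(c) `b₁⋯b_t` is an increasing subsequence of `w`; (d) for `i < j`, `zᵢ` is
bumped before `z_j`. -/
theorem row_two_bumping_basics {n t : ℕ} (w : Equiv.Perm (Fin n))
    (hw : FullyCommutative w) (z b : Fin t → ℕ) (hz : StrictMono z)
    (hzrow : Finset.image z Finset.univ = Row2 (RSKP w))
    (hb : ∀ i : Fin t, Bumps (oneLine w) (b i) (z i)) :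
    (List.ofFn z).Sublist (oneLine w) ∧
    (∀ i j : Fin t, z i ≠ b j) ∧
    (StrictMono b ∧ (List.ofFn b).Sublist (oneLine w)) ∧
    (∀ i j : Fin t, i < j → ∀ k l : ℕ,
      BumpsAt (oneLine w) k (z i) → BumpsAt (oneLine w) l (z j) → k < l) := by
  classical
  open RowTwoAux in
  have hlen : (oneLine w).length = n := by simp [oneLine]
  have hnd : (oneLine w).Nodup :=
    List.nodup_ofFn.mpr (Fin.val_injective.comp w.injective)
  have hgetD : ∀ p (hp : p < n), (oneLine w).getD p 0 = (w ⟨p, hp⟩ : ℕ) := by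
    intro p hp
    rw [List.getD_eq_getElem _ 0 (by omega)]
    simp [oneLine]
  have h3 : RowTwoAux.No321 (oneLine w) := by
    rintro p q r hpq hqr hr ⟨h1, h2⟩
    rw [hlen] at hr
    have hp : p < n := by omega
    have hq : q < n := by omega
    rw [hgetD q hq, hgetD r hr] at h1
    rw [hgetD p hp, hgetD q hq] at h2
    exact hw ⟨⟨p, hp⟩, ⟨q, hq⟩, ⟨r, hr⟩, hpq, hqr, h1, h2⟩
  have hInv : ∀ m ≤ (oneLine w).length, RowTwoAux.Inv (oneLine w) m :=
    fun m hm => RowTwoAux.inv_all hnd h3 _ le_rfl m hm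
  choose K hKb hKB using hb
  have hKlen : ∀ i, K i < (oneLine w).length := fun i => (hKB i).1
  have hbz : ∀ i, b i < z i := fun i => by
    have := RowTwoAux.bumpsAt_lt (hKB i)
    rwa [hKb i] at this
  have hzpos : ∀ i, ∃ p, p < K i ∧ p < (oneLine w).length ∧ (oneLine w).getD p 0 = z i := by
    intro i
    obtain ⟨⟨p, h1, h2, h3'⟩, -⟩ :=
      ((hInv (K i) (hKlen i).le).mem1 (z i)).mp (RowTwoAux.bumpsAt_mem_row1 (hKB i))
    exact ⟨p, h1, h2, h3'⟩
  choose P hPK hPl hPz using hzpos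
  have hInvL := hInv _ le_rfl
  have hKmono : StrictMono K := fun i j hij =>
    (hInvL.time (z i) (z j) (K i) (K j) (hKB i) (hKB j) (hKlen i) (hKlen j)).mp (hz hij)
  have part_d : ∀ i j : Fin t, i < j → ∀ k m : ℕ,
      BumpsAt (oneLine w) k (z i) → BumpsAt (oneLine w) m (z j) → k < m := by
    intro i j hij k m hk hm
    exact (hInvL.time _ _ k m hk hm hk.1 hm.1).mp (hz hij)
  have part_b : ∀ i j : Fin t, z i ≠ b j := by
    intro i j heq
    have hKjz : (oneLine w).getD (K j) 0 = z i := by rw [hKb j, ← heq]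
    have hPiKj : P i = K j :=
      RowTwoAux.getD_inj hnd (hPl i) (hKlen j) (by rw [hPz i, hKjz])
    have h1 : K j < K i := hPiKj ▸ hPK i
    rcases lt_trichotomy i j with hij | rfl | hij
    · refine h3 (P j) (K j) (K i) (hPK j) h1 (hKlen i) ⟨?_, ?_⟩
      · rw [hKb i, hKjz]; exact hbz i
      · rw [hKjz, hPz j]; exact hz hij
    · have := hbz i; omega
    · have h4 := hbz j
      have h5 := hz hij
      omega
  have hPmono : StrictMono P := by
    intro i j hij
    by_contra hcon
    push_neg at hcon
    have hne : P j ≠ P i := fun h => (hz hij).ne' (by rw [← hPz i, ← hPz j, h])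
    have hPlt : P j < P i := by omega
    refine h3 (P j) (P i) (K i) hPlt (hPK i) (hKlen i) ⟨?_, ?_⟩
    · rw [hKb i, hPz i]; exact hbz i
    · rw [hPz i, hPz j]; exact hz hij
  have ha : (List.ofFn z).Sublist (oneLine w) := RowTwoAux.sublist_of_pos hPmono hPl hPz
  have hcsub : (List.ofFn b).Sublist (oneLine w) := RowTwoAux.sublist_of_pos hKmono hKlen hKb
  have hbmono : StrictMono b := by
    intro i j hij
    have hKij := hKmono hij
    have hbinb : ¬ RowTwoAux.Bmp (oneLine w) (K j) (b i) := by
      rintro ⟨m', hm', hbm⟩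
      have hm'len : m' < (oneLine w).length := hbm.1
      obtain ⟨⟨q, hq1, hq2, hq3⟩, -⟩ :=
        ((hInv m' hm'len.le).mem1 (b i)).mp (RowTwoAux.bumpsAt_mem_row1 hbm)
      have hqKi : q = K i := RowTwoAux.getD_inj hnd hq2 (hKlen i) (by rw [hq3, hKb i])
      have hKim' : K i < m' := hqKi ▸ hq1
      have hc : (oneLine w).getD m' 0 < b i := RowTwoAux.bumpsAt_lt hbm
      refine h3 (P i) (K i) m' (hPK i) hKim' hm'len ⟨?_, ?_⟩
      · rw [hKb i]; exact hc
      · rw [hKb i, hPz i]; exact hbz i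
    have hbir1 : b i ∈ RowTwoAux.row1 (oneLine w) (K j) :=
      ((hInv (K j) (hKlen j).le).mem1 (b i)).mpr ⟨⟨K i, hKij, hKlen i, hKb i⟩, hbinb⟩
    by_contra hcon
    push_neg at hcon
    have hbne : b j ≠ b i := fun h =>
      absurd (RowTwoAux.getD_inj hnd (hKlen j) (hKlen i) (by rw [hKb j, hKb i, h]))
        (by omega)
    have hbj : b j < b i := by omega
    have hmin : z j ≤ b i :=
      RowTwoAux.find?_min (hInv (K j) (hKlen j).le).s1 (hKB j).2 (b i) hbir1
        (by rw [hKb j]; exact hbj)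
    have : b i < z j := lt_trans (hbz i) (hz hij)
    omega
  exact ⟨ha, part_b, ⟨hbmono, hcsub⟩, part_d⟩
end

section
/- Let v, w ∈ S_n be fully commutative permutations with w = v·s_i, ℓ(w) = ℓ(v)+1, and i ∈ supp(v). Set M := max{v(j) : j ≤ i} and m := min{v(j) : j ≥ i+1}. Then the subsequence M, v(i), v(i+1), m of the one-line notation of v forms a 3142-pattern; in particular v(i) < m < M < v(i+1), M occurs strictly before position i, and m occurs strictly after position i+1. -/
lemma swap_strictMonoOn_aux {n : ℕ} {i : ℕ} (h : i + 1 < n) {a b : Fin n}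
    (hab : a < b) (hne : ¬(a = (⟨i, by omega⟩ : Fin n) ∧ b = (⟨i + 1, h⟩ : Fin n))) :
    Equiv.swap (⟨i, by omega⟩ : Fin n) (⟨i + 1, h⟩ : Fin n) a <
      Equiv.swap (⟨i, by omega⟩ : Fin n) (⟨i + 1, h⟩ : Fin n) b := by
  have hne' : ¬((a : ℕ) = i ∧ (b : ℕ) = i + 1) := by
    rintro ⟨h1, h2⟩; exact hne ⟨Fin.ext h1, Fin.ext h2⟩
  have hab' : (a : ℕ) < (b : ℕ) := hab
  simp only [Equiv.swap_apply_def]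
  split_ifs <;> simp only [Fin.lt_def, Fin.ext_iff] at * <;> omega

lemma invCount_mul_simpleTr {n : ℕ} (u : Equiv.Perm (Fin n)) (i : ℕ) (h : i + 1 < n)
    (hu : u ⟨i, by omega⟩ < u ⟨i + 1, h⟩) :
    invCount (u * simpleTr i h) = invCount u + 1 := by
  have hi : i < n := by omega
  let ii : Fin n := ⟨i, hi⟩
  let jj : Fin n := ⟨i + 1, h⟩
  let σ : Equiv.Perm (Fin n) := Equiv.swap ii jj
  have hσdef : simpleTr i h = σ := rfl
  have hσ1 : σ ii = jj := Equiv.swap_apply_left _ _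
  have hσ2 : σ jj = ii := Equiv.swap_apply_right _ _
  have hσs : ∀ x, σ (σ x) = x := fun x => Equiv.swap_apply_self _ _ x
  have hmul : ∀ x, (u * simpleTr i h) x = u (σ x) := fun x => rfl
  set S := Finset.univ.filter
    (fun p : Fin n × Fin n => p.1 < p.2 ∧ (u * simpleTr i h) p.2 < (u * simpleTr i h) p.1) with hSdef
  set T := Finset.univ.filter
    (fun p : Fin n × Fin n => p.1 < p.2 ∧ u p.2 < u p.1) with hTdef
  let e : Fin n × Fin n := (ii, jj)
  have hiijj : ii < jj := by simp [Fin.lt_def, ii, jj]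
  have hswap : ∀ a b : Fin n, a < b → ¬(a = ii ∧ b = jj) → σ a < σ b := by
    intro a b hab hne
    exact swap_strictMonoOn_aux h hab hne
  have memS : ∀ p : Fin n × Fin n, p ∈ S ↔ p.1 < p.2 ∧ u (σ p.2) < u (σ p.1) := by
    intro p
    simp only [hSdef, Finset.mem_filter, Finset.mem_univ, true_and, hmul]
  have memT : ∀ p : Fin n × Fin n, p ∈ T ↔ p.1 < p.2 ∧ u p.2 < u p.1 := by
    intro p
    simp only [hTdef, Finset.mem_filter, Finset.mem_univ, true_and]
  have heS : e ∈ S := by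
    rw [memS]
    refine ⟨hiijj, ?_⟩
    show u (σ jj) < u (σ ii)
    rw [hσ1, hσ2]; exact hu
  have heT : e ∉ T := by
    rw [memT]
    rintro ⟨-, hlt⟩
    exact absurd hu (not_lt.2 (le_of_lt hlt))
  have key : ∀ p : Fin n × Fin n, p ∈ S.erase e → (σ p.1, σ p.2) ∈ T.erase e := by
    intro p hp
    rw [Finset.mem_erase, memS] at hp
    obtain ⟨hpe, hp12, hpu⟩ := hp
    rw [Finset.mem_erase, memT]
    refine ⟨?_, ?_, hpu⟩
    · intro hc
      have h1 : σ p.1 = ii := congrArg Prod.fst hc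
      have h2 : σ p.2 = jj := congrArg Prod.snd hc
      have h1' : p.1 = jj := by rw [← hσ1, ← h1, hσs]
      have h2' : p.2 = ii := by rw [← hσ2, ← h2, hσs]
      rw [h1', h2'] at hp12
      exact absurd hiijj (not_lt.2 (le_of_lt hp12))
    · refine hswap p.1 p.2 hp12 ?_
      rintro ⟨h1, h2⟩
      exact hpe (Prod.ext h1 h2)
  have key' : ∀ p : Fin n × Fin n, p ∈ T.erase e → (σ p.1, σ p.2) ∈ S.erase e := by
    intro p hp
    rw [Finset.mem_erase, memT] at hp
    obtain ⟨hpe, hp12, hpu⟩ := hp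
    rw [Finset.mem_erase, memS]
    refine ⟨?_, ?_, ?_⟩
    · intro hc
      have h1 : σ p.1 = ii := congrArg Prod.fst hc
      have h2 : σ p.2 = jj := congrArg Prod.snd hc
      have h1' : p.1 = jj := by rw [← hσ1, ← h1, hσs]
      have h2' : p.2 = ii := by rw [← hσ2, ← h2, hσs]
      rw [h1', h2'] at hp12
      exact absurd hiijj (not_lt.2 (le_of_lt hp12))
    · refine hswap p.1 p.2 hp12 ?_
      rintro ⟨h1, h2⟩
      exact hpe (Prod.ext h1 h2)
    · rw [hσs, hσs]; exact hpu
  have hcard : (S.erase e).card = (T.erase e).card := by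
    refine Finset.card_bij' (fun p _ => (σ p.1, σ p.2)) (fun p _ => (σ p.1, σ p.2))
      key key' ?_ ?_
    · intro p _; simp [hσs]
    · intro p _; simp [hσs]
  have h1 : S.card = (S.erase e).card + 1 := (Finset.card_erase_add_one heS).symm
  have h2 : T.erase e = T := Finset.erase_eq_of_notMem heT
  have hS : invCount (u * simpleTr i h) = S.card := rfl
  have hT : invCount u = T.card := rfl
  rw [hS, hT, h1, hcard, h2]

lemma exists_small_late {n : ℕ} (v : Equiv.Perm (Fin n)) (i : ℕ)
    (j : Fin n) (hji : (j : ℕ) ≤ i) (hvj : i < (v j : ℕ)) :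
    ∃ q : Fin n, i + 1 ≤ (q : ℕ) ∧ (v q : ℕ) ≤ i := by
  by_contra hc
  push_neg at hc
  have hsm : ∀ x : Fin n, (v x : ℕ) ≤ i → (x : ℕ) ≤ i := by
    intro x hx
    by_contra hx'
    exact absurd hx (not_le.2 (hc x (by omega)))
  have hin : i < n := lt_trans hvj (v j).2
  let f : Fin (i + 1) → Fin (i + 1) := fun a =>
    ⟨(v⁻¹ ⟨a.1, by omega⟩ : Fin n).1, by
      have h1 : (v (v⁻¹ ⟨a.1, by omega⟩) : ℕ) ≤ i := by
        rw [show ∀ x, v (v⁻¹ x) = x from fun x => v.apply_symm_apply x]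
        exact Nat.lt_succ_iff.mp a.2
      have := hsm _ h1
      omega⟩
  have hfinj : Function.Injective f := by
    intro a b hab
    have h1 : (f a).1 = (f b).1 := congrArg Fin.val hab
    simp only [f] at h1
    have h2 := v⁻¹.injective (Fin.ext h1)
    rw [Fin.mk.injEq] at h2
    exact Fin.ext h2
  have hfsurj : Function.Surjective f := Finite.surjective_of_injective hfinj
  obtain ⟨a, ha⟩ := hfsurj ⟨j.1, by omega⟩
  have h1 : (f a).1 = j.1 := congrArg Fin.val ha
  simp only [f] at h1
  have h2 : v⁻¹ (⟨a.1, by omega⟩ : Fin n) = j := Fin.ext h1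
  have h3 := congrArg v h2
  rw [show ∀ x, v (v⁻¹ x) = x from fun x => v.apply_symm_apply x] at h3
  have h4 : a.1 = (v j : ℕ) := congrArg Fin.val h3
  have := a.2
  omega

/-- **Lemma.** If `i ∈ supp(v)`, with `M = max{v(j) : j ≤ i}` and
`m = min{v(j) : j ≥ i+1}`, then `M v(i) v(i+1) m` is a 3142-pattern in `v`:
`v(i) < m < M < v(i+1)`, `M` occurs strictly before position `i`, and
`m` strictly after position `i+1`. -/
theorem pattern_3142 {n : ℕ} (v w : Equiv.Perm (Fin n)) (i : ℕ) (h : i + 1 < n)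
    (hv : FullyCommutative v) (hw : FullyCommutative w)
    (hwv : w = v * simpleTr i h) (hl : invCount w = invCount v + 1)
    (hsupp : i ∈ Supp v) (M m : ℕ)
    (hM : IsGreatest {x | ∃ j : Fin n, (j : ℕ) ≤ i ∧ (v j : ℕ) = x} M)
    (hm : IsLeast {x | ∃ j : Fin n, i + 1 ≤ (j : ℕ) ∧ (v j : ℕ) = x} m) :
    entry v i < m ∧ m < M ∧ M < entry v (i + 1) ∧
    (∃ p : Fin n, (p : ℕ) < i ∧ (v p : ℕ) = M) ∧
    (∃ q : Fin n, i + 1 < (q : ℕ) ∧ (v q : ℕ) = m) := by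
  have hi : i < n := by omega
  set ii : Fin n := ⟨i, hi⟩ with hiidef
  set jj : Fin n := ⟨i + 1, h⟩ with hjjdef
  have hσ1 : simpleTr i h ii = jj := Equiv.swap_apply_left _ _
  have hσ2 : simpleTr i h jj = ii := Equiv.swap_apply_right _ _
  have hσfix : ∀ x : Fin n, (x : ℕ) ≠ i → (x : ℕ) ≠ i + 1 → simpleTr i h x = x := by
    intro x h1 h2
    exact Equiv.swap_apply_of_ne_of_ne (fun hc => h1 (congrArg Fin.val hc))
      (fun hc => h2 (congrArg Fin.val hc))
  have hwapp : ∀ x, w x = v (simpleTr i h x) := fun x => by rw [hwv]; rfl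
  obtain ⟨j, hji, hij⟩ := hsupp
  have hiM : i < M := lt_of_lt_of_le hij (hM.2 ⟨j, hji, rfl⟩)
  obtain ⟨p, hpi, hvp⟩ := hM.1
  obtain ⟨q0, hq0, hvq0⟩ := hm.1
  have hmi : m ≤ i := by
    obtain ⟨q, hq1, hq2⟩ := exists_small_late v i j hji hij
    exact le_trans (hm.2 ⟨q, hq1, rfl⟩) hq2
  -- v has an ascent at position i
  have hasc : (v ii : ℕ) < (v jj : ℕ) := by
    by_contra hasc
    have hne : v jj ≠ v ii := by
      intro heq
      have := v.injective heq
      have := congrArg Fin.val this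
      simp [hiidef, hjjdef] at this
    have hlt : (v jj : ℕ) < (v ii : ℕ) :=
      lt_of_le_of_ne (not_lt.1 hasc) (fun hc => hne (Fin.ext hc))
    have hwlt : w ⟨i, by omega⟩ < w ⟨i + 1, h⟩ := by
      have e1 : w ⟨i, by omega⟩ = v jj := by rw [hwapp]; exact congrArg v hσ1
      have e2 : w ⟨i + 1, h⟩ = v ii := by rw [hwapp]; exact congrArg v hσ2
      rw [e1, e2]
      exact hlt
    have hinv := invCount_mul_simpleTr w i h hwlt
    have hws : w * simpleTr i h = v := by
      rw [hwv, mul_assoc]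
      show v * (Equiv.swap _ _ * Equiv.swap _ _) = v
      rw [Equiv.swap_mul_self, mul_one]
    rw [hws] at hinv
    omega
  have hvii_le_M : (v ii : ℕ) ≤ M := hM.2 ⟨ii, le_refl i, rfl⟩
  have hm_le_vjj : m ≤ (v jj : ℕ) := hm.2 ⟨jj, le_refl (i + 1), rfl⟩
  -- Step 1 : v(i) < m
  have step1 : (v ii : ℕ) < m := by
    by_contra hnot
    have hq0ne : (v q0 : ℕ) ≠ (v ii : ℕ) := by
      intro heq
      have := v.injective (Fin.ext heq)
      have := congrArg Fin.val this
      simp [hiidef] at this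
      omega
    have hmlt : m < (v ii : ℕ) := by
      rw [← hvq0] at hnot ⊢
      exact lt_of_le_of_ne (not_lt.1 hnot) hq0ne
    by_cases hpi' : (p : ℕ) = i
    · have hpii : p = ii := Fin.ext hpi'
      have hviiM : (v ii : ℕ) = M := by rw [← hvp, hpii]
      by_cases hq' : (q0 : ℕ) = i + 1
      · have : q0 = jj := Fin.ext hq'
        rw [this] at hvq0
        omega
      · have hq'' : i + 1 < (q0 : ℕ) := lt_of_le_of_ne hq0 (Ne.symm hq')
        refine hw ⟨ii, jj, q0, ?_, ?_, ?_, ?_⟩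
        · show (ii : ℕ) < (jj : ℕ); simp [hiidef, hjjdef]
        · show (jj : ℕ) < (q0 : ℕ); simp [hjjdef]; omega
        · show (w q0 : ℕ) < (w jj : ℕ)
          have e1 : w q0 = v q0 := by
            rw [hwapp]
            exact congrArg v (hσfix q0 (by omega) (by omega))
          have e2 : w jj = v ii := by rw [hwapp]; exact congrArg v hσ2
          rw [e1, e2, hvq0]
          exact hmlt
        · show (w jj : ℕ) < (w ii : ℕ)
          have e1 : w jj = v ii := by rw [hwapp]; exact congrArg v hσ2
          have e2 : w ii = v jj := by rw [hwapp]; exact congrArg v hσ1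
          rw [e1, e2]
          exact hasc
    · have hplt : (p : ℕ) < i := lt_of_le_of_ne hpi hpi'
      refine hv ⟨p, ii, q0, ?_, ?_, ?_, ?_⟩
      · show (p : ℕ) < (ii : ℕ); simpa [hiidef] using hplt
      · show (ii : ℕ) < (q0 : ℕ); simp [hiidef]; omega
      · show (v q0 : ℕ) < (v ii : ℕ); rw [hvq0]; exact hmlt
      · show (v ii : ℕ) < (v p : ℕ)
        rw [hvp]
        refine lt_of_le_of_ne hvii_le_M ?_
        intro hc
        rw [← hvp] at hc
        have := v.injective (Fin.ext hc)
        have := congrArg Fin.val this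
        simp [hiidef] at this
        omega
  -- Step 3 : M occurs strictly before i
  have hplt : (p : ℕ) < i := by
    refine lt_of_le_of_ne hpi ?_
    intro hc
    have : p = ii := Fin.ext hc
    rw [this] at hvp
    omega
  -- Step 4 : M < v(i+1)
  have step4 : M < (v jj : ℕ) := by
    by_contra hnot
    have hne : (v jj : ℕ) ≠ M := by
      intro hc
      rw [← hvp] at hc
      have := v.injective (Fin.ext hc)
      have := congrArg Fin.val this
      simp [hjjdef] at this
      omega
    have hlt : (v jj : ℕ) < M := lt_of_le_of_ne (not_lt.1 hnot) hne
    refine hw ⟨p, ii, jj, ?_, ?_, ?_, ?_⟩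
    · show (p : ℕ) < (ii : ℕ); simpa [hiidef] using hplt
    · show (ii : ℕ) < (jj : ℕ); simp [hiidef, hjjdef]
    · show (w jj : ℕ) < (w ii : ℕ)
      have e1 : w jj = v ii := by rw [hwapp]; exact congrArg v hσ2
      have e2 : w ii = v jj := by rw [hwapp]; exact congrArg v hσ1
      rw [e1, e2]
      exact hasc
    · show (w ii : ℕ) < (w p : ℕ)
      have e1 : w ii = v jj := by rw [hwapp]; exact congrArg v hσ1
      have e2 : w p = v p := by
        rw [hwapp]
        exact congrArg v (hσfix p (by omega) (by omega))
      rw [e1, e2, hvp]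
      exact hlt
  -- Step 5 : m occurs strictly after i+1
  have hqlt : i + 1 < (q0 : ℕ) := by
    refine lt_of_le_of_ne hq0 ?_
    intro hc
    have : q0 = jj := Fin.ext hc.symm
    rw [this] at hvq0
    omega
  have he1 : entry v i = (v ii : ℕ) := by
    simp only [entry, dif_pos hi]; rfl
  have he2 : entry v (i + 1) = (v jj : ℕ) := by
    simp only [entry, dif_pos h]; rfl
  refine ⟨by rw [he1]; exact step1, by omega, by rw [he2]; exact step4,
    ⟨p, hplt, hvp⟩, ⟨q0, hqlt, hvq0⟩⟩
end
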